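/- arXiv:1901.08519 — 7 statements merged into one kernel-verified Lean document; each statement's English description precedes it below -/
import Mathlib

section
/- Assume |f| ≤ M, let K = max(1,M), p = min_{1≤j≤m} P(A_j) > 0, and let n > 0, n_N > 0, Λ ≥ 0, Λ' ≥ 0 be reals with Λ < p·√n. Suppose |√n·(μ(g) − P(g))| ≤ Λ for every g ∈ {f·1_{A_1},…,f·1_{A_m}, 1_{A_1},…,1_{A_m}}, and that p'_1,…,p'_m ∈ [0,1] satisfy √(n_N)·|p'_j − P(A_j)| ≤ Λ' for all j. Then, with ν̃(f) = Σ_{j=1}^m [p'_j/μ(1_{A_j})]·μ(f·1_{A_j}), one has |√n·(ν̃(f) − P(f))| ≤ m·K·(2Λ + √(n/n_N)·Λ') / (p − Λ/√n). -/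
open MeasureTheory

/-- Auxiliary per-term bound for the raking-ratio step. -/
lemma stmt_5_aux (s q a I Pj p' Λ c K D : ℝ) (hs0 : 0 < s) (hD : 0 < D) (hqD : D ≤ q)
    (hK1 : 1 ≤ K) (hΛ0 : 0 ≤ Λ) (hc0 : 0 ≤ c) (hIK : |I| ≤ K)
    (hp0 : 0 ≤ p') (hp1 : p' ≤ 1)
    (hE1 : |s * (a - I)| ≤ Λ) (hE2 : |s * (q - Pj)| ≤ Λ) (hE3 : |s * (p' - Pj)| ≤ c) :
    |s * (p' / q * a - I)| ≤ K * (2 * Λ + c) / D := by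
  have hq0 : 0 < q := lt_of_lt_of_le hD hqD
  have hK0 : (0 : ℝ) ≤ K := le_trans zero_le_one hK1
  have heq : s * (p' / q * a - I)
      = (p' / q) * (s * (a - I))
        + (I / q) * (s * (p' - Pj) - s * (q - Pj)) := by
    field_simp
    ring
  have hb1 : |p' / q| ≤ 1 / D := by
    rw [abs_of_nonneg (div_nonneg hp0 hq0.le)]
    exact div_le_div₀ zero_le_one hp1 hD hqD
  have hb2 : |I / q| ≤ K / D := by
    rw [abs_div, abs_of_pos hq0]
    exact div_le_div₀ hK0 hIK hD hqD
  calc |s * (p' / q * a - I)|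
      ≤ |p' / q| * |s * (a - I)| + |I / q| * |s * (p' - Pj) - s * (q - Pj)| := by
        rw [heq]
        exact le_of_le_of_eq (abs_add_le _ _) (by rw [abs_mul (p' / q), abs_mul (I / q)])
    _ ≤ (1 / D) * Λ + (K / D) * (c + Λ) := by
        have h3 : |s * (p' - Pj) - s * (q - Pj)| ≤ c + Λ :=
          (abs_sub _ _).trans (add_le_add hE3 hE2)
        gcongr <;> positivity
    _ = (Λ + K * (c + Λ)) / D := by ring
    _ ≤ K * (2 * Λ + c) / D := by
        gcongr
        nlinarith

/-- Uniform bound on one learned raking-ratio step: if `|f| ≤ M`, `K = max(1,M)`,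
`p = min_j P(A_j) > 0`, `Λ < p√n`, the deviations of `μ` on the functions `f·1_{A_j}`
and `1_{A_j}` are at most `Λ/√n`, and `√(n_N)|p'_j − P(A_j)| ≤ Λ'` with `p'_j ∈ [0,1]`,
then `|√n(ν̃(f) − P(f))| ≤ mK(2Λ + √(n/n_N)Λ')/(p − Λ/√n)`. -/
theorem stmt_5 {𝒳 : Type*} [MeasurableSpace 𝒳] (P : Measure 𝒳) [IsProbabilityMeasure P]
    (m : ℕ) (hm : 1 ≤ m) (A : ℕ → Set 𝒳)
    (hmeas : ∀ j < m, MeasurableSet (A j))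
    (hdisj : ∀ j < m, ∀ k < m, j ≠ k → Disjoint (A j) (A k))
    (hcover : ⋃ j ∈ Finset.range m, A j = Set.univ)
    (f : 𝒳 → ℝ) (hf : Measurable f) (M : ℝ) (hfb : ∀ x, |f x| ≤ M)
    (K : ℝ) (hK : K = max 1 M)
    (p : ℝ) (hp : IsLeast {r : ℝ | ∃ j < m, r = (P (A j)).toReal} p) (hp0 : 0 < p)
    (n nN Λ Λ' : ℝ) (hn : 0 < n) (hnN : 0 < nN) (hΛ0 : 0 ≤ Λ) (hΛ'0 : 0 ≤ Λ')
    (hΛp : Λ < p * Real.sqrt n)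
    (μ : (𝒳 → ℝ) → ℝ)
    (hμf : ∀ j < m, |Real.sqrt n * (μ (fun x => f x * (A j).indicator (1 : 𝒳 → ℝ) x)
        - ∫ x, f x * (A j).indicator (1 : 𝒳 → ℝ) x ∂P)| ≤ Λ)
    (hμA : ∀ j < m,
      |Real.sqrt n * (μ ((A j).indicator (1 : 𝒳 → ℝ)) - (P (A j)).toReal)| ≤ Λ)
    (p' : ℕ → ℝ) (hp'01 : ∀ j < m, 0 ≤ p' j ∧ p' j ≤ 1)
    (hp' : ∀ j < m, Real.sqrt nN * |p' j - (P (A j)).toReal| ≤ Λ') :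
    |Real.sqrt n * ((∑ j ∈ Finset.range m, p' j / μ ((A j).indicator (1 : 𝒳 → ℝ))
          * μ (fun x => f x * (A j).indicator (1 : 𝒳 → ℝ) x)) - ∫ x, f x ∂P)|
      ≤ (m : ℝ) * K * (2 * Λ + Real.sqrt (n / nN) * Λ') / (p - Λ / Real.sqrt n) := by
  have hs0 : 0 < Real.sqrt n := Real.sqrt_pos.mpr hn
  have hsN0 : 0 < Real.sqrt nN := Real.sqrt_pos.mpr hnN
  have hD : 0 < p - Λ / Real.sqrt n := by
    have : Λ / Real.sqrt n < p := (div_lt_iff₀ hs0).mpr (by linarith)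
    linarith
  have hK1 : 1 ≤ K := hK ▸ le_max_left 1 M
  have hK0 : (0 : ℝ) ≤ K := le_trans zero_le_one hK1
  have hfK : ∀ x, |f x| ≤ K := fun x => (hfb x).trans (hK ▸ le_max_right 1 M)
  have hc0 : 0 ≤ Real.sqrt (n / nN) * Λ' := mul_nonneg (Real.sqrt_nonneg _) hΛ'0
  -- indicator rewrite
  have hind : ∀ j, (fun x => f x * (A j).indicator (1 : 𝒳 → ℝ) x) = (A j).indicator f := by
    intro j; funext x
    by_cases hx : x ∈ A j <;>
      simp [Set.indicator_of_mem, Set.indicator_of_notMem, hx]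
  -- integrability of f
  have hfint : Integrable f P := by
    refine (integrable_const K).mono' hf.aestronglyMeasurable ?_
    exact Filter.Eventually.of_forall fun x => by simpa using hfK x
  -- bound |I j| ≤ K
  have hIK : ∀ j < m, |∫ x, f x * (A j).indicator (1 : 𝒳 → ℝ) x ∂P| ≤ K := by
    intro j hj
    rw [hind j]
    have h := norm_integral_le_of_norm_le_const (μ := P) (f := (A j).indicator f) (C := K)
      (Filter.Eventually.of_forall fun x =>
        (norm_indicator_le_norm_self f x).trans (by simpa using hfK x))
    simpa [measure_univ] using h
  -- decomposition of ∫ f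
  have hsplit : ∫ x, f x ∂P
      = ∑ j ∈ Finset.range m, ∫ x, f x * (A j).indicator (1 : 𝒳 → ℝ) x ∂P := by
    have h1 : ∀ j ∈ Finset.range m,
        ∫ x, f x * (A j).indicator (1 : 𝒳 → ℝ) x ∂P = ∫ x in A j, f x ∂P := by
      intro j hj
      rw [hind j, integral_indicator (hmeas j (Finset.mem_range.mp hj))]
    rw [Finset.sum_congr rfl h1,
      ← integral_biUnion_finset (Finset.range m)
        (fun j hj => hmeas j (Finset.mem_range.mp hj))
        (fun i hi j hj hij =>
          hdisj i (Finset.mem_range.mp hi) j (Finset.mem_range.mp hj) hij)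
        (fun j hj => hfint.integrableOn),
      hcover, Measure.restrict_univ]
  -- bound on μ(1_{A j})
  have hqD : ∀ j < m,
      p - Λ / Real.sqrt n ≤ μ ((A j).indicator (1 : 𝒳 → ℝ)) := by
    intro j hj
    have h1 := hμA j hj
    rw [abs_mul, abs_of_pos hs0] at h1
    have h2 : |μ ((A j).indicator (1 : 𝒳 → ℝ)) - (P (A j)).toReal| ≤ Λ / Real.sqrt n :=
      (le_div_iff₀' hs0).mpr h1
    have h3 : p ≤ (P (A j)).toReal := hp.2 ⟨j, hj, rfl⟩
    have h4 := (abs_le.mp h2).1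
    linarith
  -- per-term bound
  have key : ∀ j ∈ Finset.range m,
      |Real.sqrt n * (p' j / μ ((A j).indicator (1 : 𝒳 → ℝ))
          * μ (fun x => f x * (A j).indicator (1 : 𝒳 → ℝ) x)
        - ∫ x, f x * (A j).indicator (1 : 𝒳 → ℝ) x ∂P)|
      ≤ K * (2 * Λ + Real.sqrt (n / nN) * Λ') / (p - Λ / Real.sqrt n) := by
    intro j hj'
    have hj := Finset.mem_range.mp hj'
    refine stmt_5_aux (Real.sqrt n) _ _ _ ((P (A j)).toReal) (p' j) Λ _ K _
      hs0 hD (hqD j hj) hK1 hΛ0 hc0 (hIK j hj) (hp'01 j hj).1 (hp'01 j hj).2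
      (hμf j hj) (hμA j hj) ?_
    have h1 : |p' j - (P (A j)).toReal| ≤ Λ' / Real.sqrt nN :=
      (le_div_iff₀' hsN0).mpr (hp' j hj)
    rw [abs_mul, abs_of_pos hs0]
    calc Real.sqrt n * |p' j - (P (A j)).toReal|
        ≤ Real.sqrt n * (Λ' / Real.sqrt nN) := by gcongr
      _ = Real.sqrt n / Real.sqrt nN * Λ' := by ring
      _ = Real.sqrt (n / nN) * Λ' := by rw [Real.sqrt_div hn.le]
  calc |Real.sqrt n * ((∑ j ∈ Finset.range m, p' j / μ ((A j).indicator (1 : 𝒳 → ℝ))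
          * μ (fun x => f x * (A j).indicator (1 : 𝒳 → ℝ) x)) - ∫ x, f x ∂P)|
      = |∑ j ∈ Finset.range m, Real.sqrt n
          * (p' j / μ ((A j).indicator (1 : 𝒳 → ℝ))
              * μ (fun x => f x * (A j).indicator (1 : 𝒳 → ℝ) x)
            - ∫ x, f x * (A j).indicator (1 : 𝒳 → ℝ) x ∂P)| := by
        rw [hsplit, ← Finset.sum_sub_distrib, Finset.mul_sum]
    _ ≤ ∑ j ∈ Finset.range m, |Real.sqrt n
          * (p' j / μ ((A j).indicator (1 : 𝒳 → ℝ))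
              * μ (fun x => f x * (A j).indicator (1 : 𝒳 → ℝ) x)
            - ∫ x, f x * (A j).indicator (1 : 𝒳 → ℝ) x ∂P)| :=
        Finset.abs_sum_le_sum_abs _ _
    _ ≤ ∑ _j ∈ Finset.range m,
          K * (2 * Λ + Real.sqrt (n / nN) * Λ') / (p - Λ / Real.sqrt n) :=
        Finset.sum_le_sum key
    _ = (m : ℝ) * K * (2 * Λ + Real.sqrt (n / nN) * Λ') / (p - Λ / Real.sqrt n) := by
        rw [Finset.sum_const, Finset.card_range, nsmul_eq_mul]
        ring
end

section
/- Assume |f| ≤ M, let K = max(1,M), p = min_{1≤j≤m} P(A_j) > 0, and let n > 0, n_N > 0, Λ ≥ 0, Λ' ≥ 0, Δ ≥ 0 be reals with Λ < p·√n. Let μ and μ̃ be two real-valued maps on bounded measurable functions such that for every g ∈ {f·1_{A_1},…,f·1_{A_m}, 1_{A_1},…,1_{A_m}}: |√n·(μ(g) − P(g))| ≤ Λ, |√n·(μ̃(g) − P(g))| ≤ Λ, and |√n·(μ̃(g) − μ(g))| ≤ Δ. Suppose p'_1,…,p'_m ∈ [0,1] satisfy √(n_N)·|p'_j − P(A_j)|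 ≤ Λ' for all j. Define ν(f) = Σ_j [P(A_j)/μ(1_{A_j})]·μ(f·1_{A_j}) and ν̃(f) = Σ_j [p'_j/μ̃(1_{A_j})]·μ̃(f·1_{A_j}). Then |√n·(ν̃(f) − ν(f))| ≤ [4mK/(p − Λ/√n)²]·( Δ + Λ²/√n + Λ'·(Λ + √n)/√(n_N) ). -/
open MeasureTheory

set_option maxHeartbeats 1000000 in
lemma rake_key (s q K L'' D Pj pj a at' b bt : ℝ)
    (hs : 0 < s) (hq : 0 < q) (hq1 : q ≤ 1) (hK : 1 ≤ K)
    (hPj0 : 0 ≤ Pj) (hPj1 : Pj ≤ 1)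
    (hb : q ≤ b) (hbt : q ≤ bt)
    (ha : |a| ≤ 2*K) (hat : |at'| ≤ 2*K)
    (hda : |s*(at' - a)| ≤ D) (hdb : |s*(bt - b)| ≤ D)
    (hpj : |pj - Pj| ≤ L'') (hD : 0 ≤ D) (hL'' : 0 ≤ L'') :
    |s*(pj/bt*at' - Pj/b*a)| ≤ 4*K/q^2 * (D + L''*s) := by
  have hb0 : 0 < b := lt_of_lt_of_le hq hb
  have hbt0 : 0 < bt := lt_of_lt_of_le hq hbt
  have hq2 : (0:ℝ) < q^2 := by positivity
  have hqbt : q^2 ≤ bt := by nlinarith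
  have hqbb : q^2 ≤ b*bt := by nlinarith
  have hid : s*(pj/bt*at' - Pj/b*a)
      = (s*(pj - Pj))*at'/bt + Pj*(s*(at' - a))/bt - Pj*a*(s*(bt - b))/(b*bt) := by
    field_simp
    ring
  rw [hid]
  have h1 : |(s*(pj - Pj))*at'/bt| ≤ 2*K*(L''*s)/q^2 := by
    rw [abs_div, abs_of_pos hbt0, abs_mul, abs_mul, abs_of_pos hs,
      div_le_div_iff₀ hbt0 hq2]
    have h := abs_nonneg (pj - Pj)
    have h' := abs_nonneg at'
    have e1 : |pj - Pj| * |at'| ≤ L'' * (2*K) := mul_le_mul hpj hat h' hL''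
    nlinarith [mul_le_mul_of_nonneg_right (mul_le_mul_of_nonneg_left e1 hs.le) hq2.le,
      mul_le_mul_of_nonneg_left hqbt (by positivity : (0:ℝ) ≤ s*(L''*(2*K)))]
  have h2 : |Pj*(s*(at' - a))/bt| ≤ K*D/q^2 := by
    rw [abs_div, abs_of_pos hbt0, abs_mul, abs_of_nonneg hPj0,
      div_le_div_iff₀ hbt0 hq2]
    have h := abs_nonneg (s*(at'-a))
    have e1 : Pj * |s*(at' - a)| ≤ 1*D := mul_le_mul hPj1 hda h zero_le_one
    nlinarith [mul_le_mul_of_nonneg_right e1 hq2.le,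
      mul_le_mul_of_nonneg_left hqbt hD,
      mul_le_mul_of_nonneg_right hK (mul_nonneg hD hbt0.le)]
  have h3 : |Pj*a*(s*(bt - b))/(b*bt)| ≤ 2*K*D/q^2 := by
    have hbb : 0 < b*bt := by positivity
    rw [abs_div, abs_of_pos hbb, abs_mul, abs_mul, abs_of_nonneg hPj0,
      div_le_div_iff₀ hbb hq2]
    have h := abs_nonneg (s*(bt-b))
    have ha0 := abs_nonneg a
    have e1 : Pj * |a| ≤ 1*(2*K) := mul_le_mul hPj1 ha ha0 zero_le_one
    have e2 : |s*(bt - b)| * q^2 ≤ D*(b*bt) := mul_le_mul hdb hqbb hq2.le hD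
    nlinarith [mul_le_mul e1 e2 (by positivity) (by linarith : (0:ℝ) ≤ 1*(2*K))]
  calc |(s*(pj - Pj))*at'/bt + Pj*(s*(at' - a))/bt - Pj*a*(s*(bt - b))/(b*bt)|
      ≤ |(s*(pj - Pj))*at'/bt + Pj*(s*(at' - a))/bt| + |Pj*a*(s*(bt - b))/(b*bt)| :=
        abs_sub _ _
    _ ≤ |(s*(pj - Pj))*at'/bt| + |Pj*(s*(at' - a))/bt| + |Pj*a*(s*(bt - b))/(b*bt)| := by
        have := abs_add_le ((s*(pj - Pj))*at'/bt) (Pj*(s*(at' - a))/bt)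
        linarith
    _ ≤ 2*K*(L''*s)/q^2 + K*D/q^2 + 2*K*D/q^2 := by linarith
    _ ≤ 4*K/q^2 * (D + L''*s) := by
        rw [← add_div, ← add_div, div_mul_eq_mul_div, div_le_div_iff₀ hq2 hq2]
        nlinarith [mul_nonneg hD (le_trans zero_le_one hK), mul_nonneg (mul_nonneg hL'' hs.le) (le_trans zero_le_one hK), sq_nonneg q]

set_option maxHeartbeats 1000000 in
/-- Comparison of a true raking step and a learned raking step: with
`ν(f) = ∑_j [P(A_j)/μ(1_{A_j})]·μ(f·1_{A_j})` and
`ν̃(f) = ∑_j [p'_j/μ̃(1_{A_j})]·μ̃(f·1_{A_j})`, under the stated deviation bounds,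
`|√n(ν̃(f) − ν(f))| ≤ [4mK/(p − Λ/√n)²]·(Δ + Λ²/√n + Λ'(Λ + √n)/√(n_N))`. -/
theorem stmt_6 {𝒳 : Type*} [MeasurableSpace 𝒳] (P : Measure 𝒳) [IsProbabilityMeasure P]
    (m : ℕ) (hm : 1 ≤ m) (A : ℕ → Set 𝒳)
    (hmeas : ∀ j < m, MeasurableSet (A j))
    (hdisj : ∀ j < m, ∀ k < m, j ≠ k → Disjoint (A j) (A k))
    (hcover : ⋃ j ∈ Finset.range m, A j = Set.univ)
    (f : 𝒳 → ℝ) (hf : Measurable f) (M : ℝ) (hfb : ∀ x, |f x| ≤ M)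
    (K : ℝ) (hK : K = max 1 M)
    (p : ℝ) (hp : IsLeast {r : ℝ | ∃ j < m, r = (P (A j)).toReal} p) (hp0 : 0 < p)
    (n nN Λ Λ' Δ : ℝ) (hn : 0 < n) (hnN : 0 < nN)
    (hΛ0 : 0 ≤ Λ) (hΛ'0 : 0 ≤ Λ') (hΔ0 : 0 ≤ Δ)
    (hΛp : Λ < p * Real.sqrt n)
    (μ μt : (𝒳 → ℝ) → ℝ)
    (hμf : ∀ j < m, |Real.sqrt n * (μ (fun x => f x * (A j).indicator (1 : 𝒳 → ℝ) x)
        - ∫ x, f x * (A j).indicator (1 : 𝒳 → ℝ) x ∂P)| ≤ Λ)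
    (hμA : ∀ j < m,
      |Real.sqrt n * (μ ((A j).indicator (1 : 𝒳 → ℝ)) - (P (A j)).toReal)| ≤ Λ)
    (hμtf : ∀ j < m, |Real.sqrt n * (μt (fun x => f x * (A j).indicator (1 : 𝒳 → ℝ) x)
        - ∫ x, f x * (A j).indicator (1 : 𝒳 → ℝ) x ∂P)| ≤ Λ)
    (hμtA : ∀ j < m,
      |Real.sqrt n * (μt ((A j).indicator (1 : 𝒳 → ℝ)) - (P (A j)).toReal)| ≤ Λ)
    (hdf : ∀ j < m, |Real.sqrt n * (μt (fun x => f x * (A j).indicator (1 : 𝒳 → ℝ) x)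
        - μ (fun x => f x * (A j).indicator (1 : 𝒳 → ℝ) x))| ≤ Δ)
    (hdA : ∀ j < m,
      |Real.sqrt n * (μt ((A j).indicator (1 : 𝒳 → ℝ)) - μ ((A j).indicator (1 : 𝒳 → ℝ)))| ≤ Δ)
    (p' : ℕ → ℝ) (hp'01 : ∀ j < m, 0 ≤ p' j ∧ p' j ≤ 1)
    (hp' : ∀ j < m, Real.sqrt nN * |p' j - (P (A j)).toReal| ≤ Λ') :
    |Real.sqrt n * ((∑ j ∈ Finset.range m, p' j / μt ((A j).indicator (1 : 𝒳 → ℝ))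
            * μt (fun x => f x * (A j).indicator (1 : 𝒳 → ℝ) x))
        - (∑ j ∈ Finset.range m, (P (A j)).toReal / μ ((A j).indicator (1 : 𝒳 → ℝ))
            * μ (fun x => f x * (A j).indicator (1 : 𝒳 → ℝ) x)))|
      ≤ 4 * (m : ℝ) * K / (p - Λ / Real.sqrt n) ^ 2
          * (Δ + Λ ^ 2 / Real.sqrt n + Λ' * (Λ + Real.sqrt n) / Real.sqrt nN) := by
  have hs : 0 < Real.sqrt n := Real.sqrt_pos.mpr hn
  have hsN : 0 < Real.sqrt nN := Real.sqrt_pos.mpr hnN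
  set s := Real.sqrt n with hsdef
  set sN := Real.sqrt nN with hsNdef
  have hq : 0 < p - Λ / s := by
    rw [sub_pos, div_lt_iff₀ hs]; linarith [hΛp]
  have hK1 : 1 ≤ K := hK ▸ le_max_left 1 M
  have hMK : M ≤ K := hK ▸ le_max_right 1 M
  have hp1 : p ≤ 1 := by
    obtain ⟨j, hj, rfl⟩ := hp.1
    have h1 := ENNReal.toReal_mono ENNReal.one_ne_top (prob_le_one (μ := P) (s := A j))
    simpa using h1
  have hq1 : p - Λ / s ≤ 1 := by
    have : 0 ≤ Λ / s := div_nonneg hΛ0 hs.le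
    linarith
  have hΛs : Λ / s < p := by rwa [div_lt_iff₀ hs]
  -- per-term bound
  have key : ∀ j ∈ Finset.range m,
      |s * (p' j / μt ((A j).indicator (1 : 𝒳 → ℝ))
            * μt (fun x => f x * (A j).indicator (1 : 𝒳 → ℝ) x)
          - (P (A j)).toReal / μ ((A j).indicator (1 : 𝒳 → ℝ))
            * μ (fun x => f x * (A j).indicator (1 : 𝒳 → ℝ) x))|
        ≤ 4*K/(p - Λ / s)^2 * (Δ + (Λ'/sN)*s) := by
    intro j hjm
    rw [Finset.mem_range] at hjm
    have hPj0 : (0:ℝ) ≤ (P (A j)).toReal := ENNReal.toReal_nonneg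
    have hPj1 : (P (A j)).toReal ≤ 1 := by
      have h1 := ENNReal.toReal_mono ENNReal.one_ne_top (prob_le_one (μ := P) (s := A j))
      simpa using h1
    have hpPj : p ≤ (P (A j)).toReal := hp.2 ⟨j, hjm, rfl⟩
    -- lower bounds on the denominators
    have hblow : ∀ (ν : (𝒳 → ℝ) → ℝ),
        |s * (ν ((A j).indicator (1 : 𝒳 → ℝ)) - (P (A j)).toReal)| ≤ Λ →
        p - Λ / s ≤ ν ((A j).indicator (1 : 𝒳 → ℝ)) := by
      intro ν hν
      have h1 := (abs_le.mp hν).1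
      have h2 : Λ / s * s = Λ := div_mul_cancel₀ _ (ne_of_gt hs)
      nlinarith [mul_le_mul_of_nonneg_left hpPj hs.le]
    -- bound on the integral
    have hI : |∫ x, f x * (A j).indicator (1 : 𝒳 → ℝ) x ∂P| ≤ K := by
      have hbound : ∀ x, ‖f x * (A j).indicator (1 : 𝒳 → ℝ) x‖ ≤ K := by
        intro x
        by_cases hx : x ∈ A j
        · simp only [Set.indicator_of_mem hx, Pi.one_apply, mul_one, Real.norm_eq_abs]
          exact le_trans (hfb x) hMK
        · simp only [Set.indicator_of_notMem hx, mul_zero, norm_zero]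
          linarith
      have := norm_integral_le_of_norm_le_const (μ := P)
        (f := fun x => f x * (A j).indicator (1 : 𝒳 → ℝ) x) (C := K)
        (Filter.Eventually.of_forall hbound)
      simpa [Real.norm_eq_abs, measure_univ] using this
    -- bounds on numerators
    have habound : ∀ (ν : (𝒳 → ℝ) → ℝ),
        |s * (ν (fun x => f x * (A j).indicator (1 : 𝒳 → ℝ) x)
          - ∫ x, f x * (A j).indicator (1 : 𝒳 → ℝ) x ∂P)| ≤ Λ →
        |ν (fun x => f x * (A j).indicator (1 : 𝒳 → ℝ) x)| ≤ 2*K := by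
      intro ν hν
      set a := ν (fun x => f x * (A j).indicator (1 : 𝒳 → ℝ) x)
      set I := ∫ x, f x * (A j).indicator (1 : 𝒳 → ℝ) x ∂P
      have h1 : s * |a - I| ≤ Λ := by
        rw [← abs_of_pos hs, ← abs_mul]; exact hν
      have h2 : |a - I| ≤ Λ / s := by
        rw [le_div_iff₀ hs]; linarith [mul_comm s |a - I|]
      have h3 : |a| ≤ |a - I| + |I| := by
        calc |a| = |(a - I) + I| := by ring_nf
          _ ≤ |a - I| + |I| := abs_add_le _ _
      have : Λ / s ≤ 1 := le_trans hΛs.le hp1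
      linarith
    have hpj : |p' j - (P (A j)).toReal| ≤ Λ'/sN := by
      rw [le_div_iff₀ hsN]
      calc |p' j - (P (A j)).toReal| * sN = sN * |p' j - (P (A j)).toReal| := mul_comm _ _
        _ ≤ Λ' := hp' j hjm
    exact rake_key s (p - Λ / s) K (Λ'/sN) Δ (P (A j)).toReal (p' j)
      (μ (fun x => f x * (A j).indicator (1 : 𝒳 → ℝ) x))
      (μt (fun x => f x * (A j).indicator (1 : 𝒳 → ℝ) x))
      (μ ((A j).indicator (1 : 𝒳 → ℝ))) (μt ((A j).indicator (1 : 𝒳 → ℝ)))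
      hs hq hq1 hK1 hPj0 hPj1
      (hblow μ (hμA j hjm)) (hblow μt (hμtA j hjm))
      (habound μ (hμf j hjm)) (habound μt (hμtf j hjm))
      (hdf j hjm) (hdA j hjm) hpj hΔ0 (div_nonneg hΛ'0 hsN.le)
  -- sum up
  rw [← Finset.sum_sub_distrib, Finset.mul_sum]
  have hKq0 : (0:ℝ) ≤ 4 * (m:ℝ) * K / (p - Λ / s)^2 := by
    apply div_nonneg _ (sq_nonneg _)
    have : (0:ℝ) ≤ (m:ℝ) := Nat.cast_nonneg m
    nlinarith
  calc |∑ j ∈ Finset.range m, s * (p' j / μt ((A j).indicator (1 : 𝒳 → ℝ))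
            * μt (fun x => f x * (A j).indicator (1 : 𝒳 → ℝ) x)
          - (P (A j)).toReal / μ ((A j).indicator (1 : 𝒳 → ℝ))
            * μ (fun x => f x * (A j).indicator (1 : 𝒳 → ℝ) x))|
      ≤ ∑ j ∈ Finset.range m, |s * (p' j / μt ((A j).indicator (1 : 𝒳 → ℝ))
            * μt (fun x => f x * (A j).indicator (1 : 𝒳 → ℝ) x)
          - (P (A j)).toReal / μ ((A j).indicator (1 : 𝒳 → ℝ))
            * μ (fun x => f x * (A j).indicator (1 : 𝒳 → ℝ) x))| :=
        Finset.abs_sum_le_sum_abs _ _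
    _ ≤ ∑ _j ∈ Finset.range m, 4*K/(p - Λ / s)^2 * (Δ + (Λ'/sN)*s) :=
        Finset.sum_le_sum key
    _ = (m:ℝ) * (4*K/(p - Λ / s)^2 * (Δ + (Λ'/sN)*s)) := by
        rw [Finset.sum_const, Finset.card_range, nsmul_eq_mul]
    _ = 4 * (m:ℝ) * K / (p - Λ / s)^2 * (Δ + (Λ'/sN)*s) := by ring
    _ ≤ 4 * (m:ℝ) * K / (p - Λ / s)^2
          * (Δ + Λ ^ 2 / s + Λ' * (Λ + s) / sN) := by
        apply mul_le_mul_of_nonneg_left _ hKq0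
        have h1 : (0:ℝ) ≤ Λ^2 / s := by positivity
        have h2 : (Λ'/sN)*s ≤ Λ' * (Λ + s) / sN := by
          rw [div_mul_eq_mul_div, div_le_div_iff₀ hsN hsN]
          nlinarith [mul_nonneg (mul_nonneg hΛ'0 hΛ0) hsN.le]
        linarith
end

section
/- Let Λ_n = max( sup_{0≤N≤N₀} ‖α̃_n^(N)‖_F , sup_{0≤N≤N₀} ‖α_n^(N)‖_F ) and Λ'_n = max_{1≤N≤N₀} max_{1≤j≤m_N} |√(n_N)·(ℙ'_N(A_j^(N)) − P(A_j^(N)))|. On the event B_{n,N₀} ∩ {Λ_n < p_(N₀)·√n}, for every 1 ≤ N ≤ N₀ one has ‖α̃_n^(N) − α_n^(N)‖_F ≤ N·C_{n,N}^N·( Λ_n²/√n + Λ'_n·(Λ_n + √n)/√(n_(N)) ), where C_{n,N} = 4·m_(N)·K_F/(p_(N) − Λ_n/√n)², m_(N) = max_{1≤M≤N} m_M, p_(N) = min_{1≤M≤N} min_{1≤j≤m_M} P(A_j^(M)), and n_(N) = min_{1≤M≤N} n_M. -/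
open MeasureTheory ProbabilityTheory

/-- Real-valued indicator of a set. -/
noncomputable def ind {𝒳 : Type*} (A : Set 𝒳) : 𝒳 → ℝ := A.indicator 1

/-- Empirical measure of `f` based on the sample `X 0, …, X (n−1)`. -/
noncomputable def empMeas {𝒳 Ω : Type*} (n : ℕ) (X : ℕ → Ω → 𝒳) (ω : Ω) (f : 𝒳 → ℝ) : ℝ :=
  (∑ i ∈ Finset.range n, f (X i ω)) / n

/-- One raking-ratio step with weights `w` over the partition `A 0, …, A (m−1)`
(a vanishing denominator yields `0`, as division by zero is `0`). -/
noncomputable def rakeStep {𝒳 : Type*} (m : ℕ) (A : ℕ → Set 𝒳) (w : ℕ → ℝ)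
    (μ : (𝒳 → ℝ) → ℝ) (f : 𝒳 → ℝ) : ℝ :=
  ∑ j ∈ Finset.range m, w j / μ (ind (A j)) * μ (fun x => f x * ind (A j) x)

/-- Raking-ratio empirical measure using the weights `w N j` at stage `N` for the cell
`A N j`; `w N j = P(A_j^{(N)})` gives `ℙ_n^{(N)}` and `w N j = ℙ'_N(A_j^{(N)})` gives
the learned version `ℙ̃_n^{(N)}`. -/
noncomputable def rakedMeas {𝒳 Ω : Type*} (w : ℕ → ℕ → ℝ) (m : ℕ → ℕ)
    (A : ℕ → ℕ → Set 𝒳) (n : ℕ) (X : ℕ → Ω → 𝒳) (ω : Ω) : ℕ → (𝒳 → ℝ) → ℝ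
  | 0 => empMeas n X ω
  | N + 1 => rakeStep (m (N + 1)) (A (N + 1)) (w (N + 1)) (rakedMeas w m A n X ω N)

set_option maxHeartbeats 4000000 in
/-- On the event `B_{n,N₀} ∩ {Λ_n < p_{(N₀)}√n}`, for every `1 ≤ N ≤ N₀`,
`‖α̃_n^{(N)} − α_n^{(N)}‖_F ≤ N·C_{n,N}^N·(Λ_n²/√n + Λ'_n(Λ_n + √n)/√(n_{(N)}))`
with `C_{n,N} = 4 m_{(N)} K_F/(p_{(N)} − Λ_n/√n)²`. -/
theorem stmt_8 {𝒳 Ω : Type*} [MeasurableSpace 𝒳] [MeasurableSpace Ω]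
    (P : Measure 𝒳) [IsProbabilityMeasure P]
    (Pr : Measure Ω) [IsProbabilityMeasure Pr]
    (N₀ : ℕ) (hN₀ : 1 ≤ N₀) (m : ℕ → ℕ) (A : ℕ → ℕ → Set 𝒳)
    (hmeas : ∀ N ∈ Finset.Icc 1 N₀, ∀ j < m N, MeasurableSet (A N j))
    (hdisj : ∀ N ∈ Finset.Icc 1 N₀, ∀ j < m N, ∀ k < m N, j ≠ k → Disjoint (A N j) (A N k))
    (hcover : ∀ N ∈ Finset.Icc 1 N₀, ⋃ j ∈ Finset.range (m N), A N j = Set.univ)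
    (hppos : ∀ N ∈ Finset.Icc 1 N₀, ∀ j < m N, 0 < P (A N j))
    (n : ℕ) (hn : 1 ≤ n) (X : ℕ → Ω → 𝒳)
    (hXmeas : ∀ i, Measurable (X i))
    (hXindep : iIndepFun (fun i : Fin n => X i) Pr)
    (hXlaw : ∀ i : Fin n, Measure.map (X i) Pr = P)
    (nY : ℕ → ℕ) (hnY : ∀ N ∈ Finset.Icc 1 N₀, 1 ≤ nY N)
    (Y : ℕ → ℕ → Ω → 𝒳) (hYmeas : ∀ N i, Measurable (Y N i))
    (hYindep : ∀ N ∈ Finset.Icc 1 N₀,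
      iIndepFun (fun i : Fin (nY N) => Y N i) Pr)
    (hYlaw : ∀ N ∈ Finset.Icc 1 N₀, ∀ i < nY N, Measure.map (Y N i) Pr = P)
    (F : Set (𝒳 → ℝ)) (hFcount : F.Countable) (hFmeas : ∀ f ∈ F, Measurable f)
    (MF : ℝ) (hMF : ∀ f ∈ F, ∀ x, |f x| ≤ MF)
    (hFind : ∀ N ∈ Finset.Icc 1 N₀, ∀ j < m N, ind (A N j) ∈ F)
    (hFstable : ∀ f ∈ F, ∀ N ∈ Finset.Icc 1 N₀, ∀ j < m N,
      (fun x => f x * ind (A N j) x) ∈ F)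
    (mbar pbar nbar : ℕ → ℝ)
    (hmbar : ∀ N ∈ Finset.Icc 1 N₀,
      IsGreatest {r : ℝ | ∃ M ∈ Finset.Icc 1 N, r = (m M : ℝ)} (mbar N))
    (hpbar : ∀ N ∈ Finset.Icc 1 N₀,
      IsLeast {r : ℝ | ∃ M ∈ Finset.Icc 1 N, ∃ j < m M, r = (P (A M j)).toReal} (pbar N))
    (hnbar : ∀ N ∈ Finset.Icc 1 N₀,
      IsLeast {r : ℝ | ∃ M ∈ Finset.Icc 1 N, r = (nY M : ℝ)} (nbar N))
    (ω : Ω)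
    (hB : ∀ N ∈ Finset.Icc 1 N₀, ∀ j < m N, 0 < empMeas n X ω (ind (A N j)))
    (Λ Λ' : ℝ)
    (hΛ : ∀ N ≤ N₀, ∀ f ∈ F,
      |Real.sqrt n * (rakedMeas (fun N j => empMeas (nY N) (Y N) ω (ind (A N j)))
          m A n X ω N f - ∫ x, f x ∂P)| ≤ Λ ∧
      |Real.sqrt n * (rakedMeas (fun N j => (P (A N j)).toReal)
          m A n X ω N f - ∫ x, f x ∂P)| ≤ Λ)
    (hΛ' : ∀ N ∈ Finset.Icc 1 N₀, ∀ j < m N,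
      |Real.sqrt (nY N) * (empMeas (nY N) (Y N) ω (ind (A N j)) - (P (A N j)).toReal)| ≤ Λ')
    (hΛp : Λ < pbar N₀ * Real.sqrt n) :
    ∀ N ∈ Finset.Icc 1 N₀, ∀ f ∈ F,
      |Real.sqrt n * (rakedMeas (fun N j => empMeas (nY N) (Y N) ω (ind (A N j)))
            m A n X ω N f - ∫ x, f x ∂P)
        - Real.sqrt n * (rakedMeas (fun N j => (P (A N j)).toReal)
            m A n X ω N f - ∫ x, f x ∂P)|
      ≤ (N : ℝ) * (4 * mbar N * max 1 MF / (pbar N - Λ / Real.sqrt n) ^ 2) ^ N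
          * (Λ ^ 2 / Real.sqrt n + Λ' * (Λ + Real.sqrt n) / Real.sqrt (nbar N)) := by
  classical
  have hn0 : (0:ℝ) < n := by exact_mod_cast hn
  have hs : (0:ℝ) < Real.sqrt n := Real.sqrt_pos.2 hn0
  set s : ℝ := Real.sqrt n with hsdef
  set K : ℝ := max 1 MF with hKdef
  have hK1 : (1:ℝ) ≤ K := le_max_left _ _
  have hK0 : (0:ℝ) < K := lt_of_lt_of_le one_pos hK1
  set Q : ℕ → (𝒳 → ℝ) → ℝ :=
    rakedMeas (fun N j => empMeas (nY N) (Y N) ω (ind (A N j))) m A n X ω with hQdef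
  set R : ℕ → (𝒳 → ℝ) → ℝ :=
    rakedMeas (fun N j => (P (A N j)).toReal) m A n X ω with hRdef
  have hQP : ∀ N, N ≤ N₀ → ∀ f ∈ F, |Q N f - ∫ x, f x ∂P| ≤ Λ / s := by
    intro N hN f hf
    have h := (hΛ N hN f hf).1
    rw [abs_mul, abs_of_pos hs] at h
    rw [le_div_iff₀ hs]
    linarith
  have hRP : ∀ N, N ≤ N₀ → ∀ f ∈ F, |R N f - ∫ x, f x ∂P| ≤ Λ / s := by
    intro N hN f hf
    have h := (hΛ N hN f hf).2
    rw [abs_mul, abs_of_pos hs] at h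
    rw [le_div_iff₀ hs]
    linarith
  have hmemN₀ : N₀ ∈ Finset.Icc 1 N₀ := Finset.mem_Icc.2 ⟨hN₀, le_rfl⟩
  obtain ⟨M₀, hM₀, j₀, hj₀, hpeq₀⟩ := (hpbar N₀ hmemN₀).1
  have hf₀ : ind (A M₀ j₀) ∈ F := hFind M₀ hM₀ j₀ hj₀
  have hΛ0 : 0 ≤ Λ := le_trans (abs_nonneg _) ((hΛ 0 (Nat.zero_le _) _ hf₀).1)
  have hΛ'0 : 0 ≤ Λ' := le_trans (abs_nonneg _) (hΛ' M₀ hM₀ j₀ hj₀)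
  have hε0 : (0:ℝ) ≤ Λ / s := div_nonneg hΛ0 hs.le
  have hεp : Λ / s < pbar N₀ := (div_lt_iff₀ hs).2 hΛp
  have hIccMono : ∀ {N N' : ℕ}, N ≤ N' → Finset.Icc 1 N ⊆ Finset.Icc 1 N' := by
    intro N N' h
    exact Finset.Icc_subset_Icc le_rfl h
  have hpbar_le : ∀ N, N ∈ Finset.Icc 1 N₀ → ∀ M, M ∈ Finset.Icc 1 N → ∀ j, j < m M →
      pbar N ≤ (P (A M j)).toReal := by
    intro N hN M hM j hj
    exact (hpbar N hN).2 ⟨M, hM, j, hj, rfl⟩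
  have hpbar_anti : ∀ N N', N ∈ Finset.Icc 1 N₀ → N' ∈ Finset.Icc 1 N₀ → N ≤ N' →
      pbar N' ≤ pbar N := by
    intro N N' hN hN' hNN'
    obtain ⟨M, hM, j, hj, he⟩ := (hpbar N hN).1
    rw [he]
    exact hpbar_le N' hN' M (hIccMono hNN' hM) j hj
  have hpbar_le1 : ∀ N, N ∈ Finset.Icc 1 N₀ → pbar N ≤ 1 := by
    intro N hN
    obtain ⟨M, hM, j, hj, he⟩ := (hpbar N hN).1
    rw [he]
    have h := ENNReal.toReal_mono ENNReal.one_ne_top (prob_le_one (μ := P) (s := A M j))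
    simpa using h
  have hδpos : ∀ N, N ∈ Finset.Icc 1 N₀ → 0 < pbar N - Λ / s := by
    intro N hN
    have h := hpbar_anti N N₀ hN hmemN₀ (Finset.mem_Icc.1 hN).2
    linarith
  have hδle1 : ∀ N, N ∈ Finset.Icc 1 N₀ → pbar N - Λ / s ≤ 1 := by
    intro N hN
    have := hpbar_le1 N hN
    linarith
  have hmbar_ge : ∀ N, N ∈ Finset.Icc 1 N₀ → ∀ M, M ∈ Finset.Icc 1 N → (m M : ℝ) ≤ mbar N := by
    intro N hN M hM
    exact (hmbar N hN).2 ⟨M, hM, rfl⟩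
  have hmbar1 : ∀ N, N ∈ Finset.Icc 1 N₀ → 1 ≤ mbar N := by
    intro N hN
    obtain ⟨M, hM, j, hj, _⟩ := (hpbar N hN).1
    have h1 : (1:ℝ) ≤ (m M : ℝ) := by
      have := Nat.lt_of_le_of_lt (Nat.zero_le j) hj
      exact_mod_cast this
    exact le_trans h1 (hmbar_ge N hN M hM)
  have hmbar_mono : ∀ N N', N ∈ Finset.Icc 1 N₀ → N' ∈ Finset.Icc 1 N₀ → N ≤ N' →
      mbar N ≤ mbar N' := by
    intro N N' hN hN' hNN'
    obtain ⟨M, hM, he⟩ := (hmbar N hN).1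
    rw [he]
    exact hmbar_ge N' hN' M (hIccMono hNN' hM)
  have hnbar_le : ∀ N, N ∈ Finset.Icc 1 N₀ → ∀ M, M ∈ Finset.Icc 1 N → nbar N ≤ (nY M : ℝ) := by
    intro N hN M hM
    exact (hnbar N hN).2 ⟨M, hM, rfl⟩
  have hnbar1 : ∀ N, N ∈ Finset.Icc 1 N₀ → 1 ≤ nbar N := by
    intro N hN
    obtain ⟨M, hM, he⟩ := (hnbar N hN).1
    rw [he]
    have hM' : M ∈ Finset.Icc 1 N₀ := hIccMono (Finset.mem_Icc.1 hN).2 hM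
    exact_mod_cast hnY M hM'
  have hnbar_anti : ∀ N N', N ∈ Finset.Icc 1 N₀ → N' ∈ Finset.Icc 1 N₀ → N ≤ N' →
      nbar N' ≤ nbar N := by
    intro N N' hN hN' hNN'
    obtain ⟨M, hM, he⟩ := (hnbar N hN).1
    rw [he]
    exact hnbar_le N' hN' M (hIccMono hNN' hM)
  have hintK : ∀ g ∈ F, |∫ x, g x ∂P| ≤ K := by
    intro g hg
    have h := norm_integral_le_of_norm_le_const (μ := P) (f := g) (C := MF)
      (Filter.Eventually.of_forall (fun x => by simpa using hMF g hg x))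
    rw [probReal_univ] at h
    simp only [Real.norm_eq_abs, ENNReal.toReal_one, mul_one] at h
    exact le_trans h (le_max_right _ _)
  have hintInd : ∀ N, N ∈ Finset.Icc 1 N₀ → ∀ j, j < m N →
      ∫ x, ind (A N j) x ∂P = (P (A N j)).toReal := by
    intro N hN j hj
    simpa [ind, measureReal_def] using integral_indicator_one (μ := P) (hmeas N hN j hj)
  have hsum_p : ∀ N, N ∈ Finset.Icc 1 N₀ →
      ∑ j ∈ Finset.range (m N), (P (A N j)).toReal ≤ 1 := by
    intro N hN
    have h : (∑ j ∈ Finset.range (m N), P (A N j)) ≤ P Set.univ :=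
      sum_measure_le_measure_univ
        (fun j hj => (hmeas N hN j (Finset.mem_range.1 hj)).nullMeasurableSet)
        (fun j hj k hk hjk =>
          (hdisj N hN j (Finset.mem_range.1 hj) k (Finset.mem_range.1 hk) hjk).aedisjoint)
    rw [measure_univ] at h
    calc ∑ j ∈ Finset.range (m N), (P (A N j)).toReal
        = (∑ j ∈ Finset.range (m N), P (A N j)).toReal :=
          (ENNReal.toReal_sum (fun j _ => measure_ne_top P _)).symm
      _ ≤ ENNReal.toReal 1 := ENNReal.toReal_mono ENNReal.one_ne_top h
      _ = 1 := by simp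
  have hQsucc : ∀ (N : ℕ) (f : 𝒳 → ℝ), Q (N+1) f = ∑ j ∈ Finset.range (m (N+1)),
      empMeas (nY (N+1)) (Y (N+1)) ω (ind (A (N+1) j)) / Q N (ind (A (N+1) j)) *
        Q N (fun x => f x * ind (A (N+1) j) x) := by
    intro N f
    rw [hQdef]
    rfl
  have hRsucc : ∀ (N : ℕ) (f : 𝒳 → ℝ), R (N+1) f = ∑ j ∈ Finset.range (m (N+1)),
      (P (A (N+1) j)).toReal / R N (ind (A (N+1) j)) *
        R N (fun x => f x * ind (A (N+1) j) x) := by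
    intro N f
    rw [hRdef]
    rfl
  have hεle1 : Λ / s ≤ 1 := le_trans hεp.le (hpbar_le1 N₀ hmemN₀)
  -- the one-step estimate
  have hstep : ∀ N : ℕ, N + 1 ≤ N₀ → ∀ Δ : ℝ, 0 ≤ Δ →
      (∀ g ∈ F, |Q N g - R N g| ≤ Δ) → ∀ f ∈ F,
      |Q (N+1) f - R (N+1) f| ≤
        3 * K / (pbar (N+1) - Λ / s) ^ 2 * Δ +
          (m (N+1) : ℝ) * ((K * (Λ + s) / s) * (Λ' / Real.sqrt (nY (N+1))) /
            (pbar (N+1) - Λ / s)) := by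
    intro N hN1 Δ hΔ0 hprev f hf
    have hNmem : N + 1 ∈ Finset.Icc 1 N₀ := Finset.mem_Icc.2 ⟨Nat.le_add_left 1 N, hN1⟩
    have hNle : N ≤ N₀ := le_trans (Nat.le_succ N) hN1
    have hδ0 : 0 < pbar (N+1) - Λ / s := hδpos _ hNmem
    have hδ1 : pbar (N+1) - Λ / s ≤ 1 := hδle1 _ hNmem
    have hnY0 : (0:ℝ) < Real.sqrt (nY (N+1)) :=
      Real.sqrt_pos.2 (by exact_mod_cast hnY _ hNmem)
    rw [hQsucc, hRsucc, ← Finset.sum_sub_distrib]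
    refine le_trans (Finset.abs_sum_le_sum_abs _ _) ?_
    have hterm : ∀ j ∈ Finset.range (m (N+1)),
        |empMeas (nY (N+1)) (Y (N+1)) ω (ind (A (N+1) j)) / Q N (ind (A (N+1) j)) *
            Q N (fun x => f x * ind (A (N+1) j) x) -
          (P (A (N+1) j)).toReal / R N (ind (A (N+1) j)) *
            R N (fun x => f x * ind (A (N+1) j) x)|
        ≤ (K * (Λ + s) / s) * (Λ' / Real.sqrt (nY (N+1))) / (pbar (N+1) - Λ / s) +
            (P (A (N+1) j)).toReal * (3 * K / (pbar (N+1) - Λ / s) ^ 2 * Δ) := by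
      intro j hjr
      have hj : j < m (N+1) := Finset.mem_range.1 hjr
      have hindF : ind (A (N+1) j) ∈ F := hFind _ hNmem j hj
      have hmulF : (fun x => f x * ind (A (N+1) j) x) ∈ F := hFstable f hf _ hNmem j hj
      set a := Q N (fun x => f x * ind (A (N+1) j) x) with hadef
      set b := Q N (ind (A (N+1) j)) with hbdef
      set c := R N (fun x => f x * ind (A (N+1) j) x) with hcdef
      set d := R N (ind (A (N+1) j)) with hddef
      set pj := (P (A (N+1) j)).toReal with hpjdef
      set wj := empMeas (nY (N+1)) (Y (N+1)) ω (ind (A (N+1) j)) with hwjdef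
      set δ := pbar (N+1) - Λ / s with hδdef
      have hpj0 : 0 ≤ pj := ENNReal.toReal_nonneg
      have hpjge : pbar (N+1) ≤ pj :=
        hpbar_le _ hNmem _ (Finset.mem_Icc.2 ⟨Nat.le_add_left 1 N, le_rfl⟩) j hj
      have hbp : |b - pj| ≤ Λ / s := by
        have h := hQP N hNle _ hindF
        rwa [hintInd _ hNmem j hj] at h
      have hdp : |d - pj| ≤ Λ / s := by
        have h := hRP N hNle _ hindF
        rwa [hintInd _ hNmem j hj] at h
      have hbδ : δ ≤ b := by
        have h := abs_le.1 hbp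
        have := h.1
        simp only [hδdef]
        linarith
      have hdδ : δ ≤ d := by
        have h := abs_le.1 hdp
        have := h.1
        simp only [hδdef]
        linarith
      have hb0 : 0 < b := lt_of_lt_of_le hδ0 hbδ
      have hd0 : 0 < d := lt_of_lt_of_le hδ0 hdδ
      have hintf : |∫ x, (fun x => f x * ind (A (N+1) j) x) x ∂P| ≤ K := hintK _ hmulF
      have ha : |a| ≤ K + Λ / s := by
        have h2 := hQP N hNle _ hmulF
        calc |a| = |(a - ∫ x, (fun x => f x * ind (A (N+1) j) x) x ∂P) +
              ∫ x, (fun x => f x * ind (A (N+1) j) x) x ∂P| := by ring_nf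
          _ ≤ |a - ∫ x, (fun x => f x * ind (A (N+1) j) x) x ∂P| +
              |∫ x, (fun x => f x * ind (A (N+1) j) x) x ∂P| := abs_add_le _ _
          _ ≤ K + Λ / s := by linarith
      have ha' : |a| ≤ K * (Λ + s) / s := by
        have he : K * (Λ + s) / s = K * Λ / s + K := by
          field_simp
        have h3 : Λ / s ≤ K * Λ / s := by
          rw [mul_div_assoc]
          exact le_mul_of_one_le_left hε0 hK1
        linarith
      have hc2 : |c| ≤ 2 * K := by
        have h2 := hRP N hNle _ hmulF
        have : |c| ≤ K + Λ / s := by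
          calc |c| = |(c - ∫ x, (fun x => f x * ind (A (N+1) j) x) x ∂P) +
                ∫ x, (fun x => f x * ind (A (N+1) j) x) x ∂P| := by ring_nf
            _ ≤ |c - ∫ x, (fun x => f x * ind (A (N+1) j) x) x ∂P| +
                |∫ x, (fun x => f x * ind (A (N+1) j) x) x ∂P| := abs_add_le _ _
            _ ≤ K + Λ / s := by linarith
        linarith
      have hac : |a - c| ≤ Δ := hprev _ hmulF
      have hdb : |d - b| ≤ Δ := by
        have h := hprev _ hindF
        rwa [abs_sub_comm] at h
      have hwp : |wj - pj| ≤ Λ' / Real.sqrt (nY (N+1)) := by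
        have h3 := hΛ' (N+1) hNmem j hj
        rw [abs_mul, abs_of_pos hnY0] at h3
        rw [le_div_iff₀ hnY0]
        linarith
      clear_value a b c d pj wj
      have hid : wj / b * a - pj / d * c =
          (wj - pj) * (a / b) + pj * ((a - c) / b + c * (d - b) / (b * d)) := by
        field_simp
        ring
      rw [hid]
      have h4 : |(wj - pj) * (a / b)| ≤
          (K * (Λ + s) / s) * (Λ' / Real.sqrt (nY (N+1))) / δ := by
        rw [abs_mul, abs_div, abs_of_pos hb0]
        calc |wj - pj| * (|a| / b)
            ≤ (Λ' / Real.sqrt (nY (N+1))) * ((K * (Λ + s) / s) / δ) := by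
              refine mul_le_mul hwp ?_ (by positivity) (by positivity)
              exact div_le_div₀ (by positivity) ha' hδ0 hbδ
          _ = (K * (Λ + s) / s) * (Λ' / Real.sqrt (nY (N+1))) / δ := by ring
      have h5 : |(a - c) / b + c * (d - b) / (b * d)| ≤ 3 * K / δ ^ 2 * Δ := by
        have h6 : |(a - c) / b| ≤ Δ / δ := by
          rw [abs_div, abs_of_pos hb0]
          exact div_le_div₀ hΔ0 hac hδ0 hbδ
        have h7 : |c * (d - b) / (b * d)| ≤ 2 * K * Δ / δ ^ 2 := by
          rw [abs_div, abs_mul, abs_of_pos (mul_pos hb0 hd0)]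
          have hbd : δ ^ 2 ≤ b * d := by nlinarith
          refine div_le_div₀ (by positivity) ?_ (by positivity) hbd
          exact mul_le_mul hc2 hdb (abs_nonneg _) (by linarith)
        have h8 : Δ / δ ≤ K * Δ / δ ^ 2 := by
          rw [div_le_div_iff₀ hδ0 (by positivity)]
          have e : (Δ * δ) * δ ≤ (Δ * δ) * 1 :=
            mul_le_mul_of_nonneg_left hδ1 (mul_nonneg hΔ0 hδ0.le)
          have e2 : Δ * δ ≤ K * (Δ * δ) := le_mul_of_one_le_left (mul_nonneg hΔ0 hδ0.le) hK1
          nlinarith [e, e2]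
        calc |(a - c) / b + c * (d - b) / (b * d)|
            ≤ |(a - c) / b| + |c * (d - b) / (b * d)| := abs_add_le _ _
          _ ≤ Δ / δ + 2 * K * Δ / δ ^ 2 := add_le_add h6 h7
          _ ≤ 3 * K / δ ^ 2 * Δ := by
              have h9 : 3 * K / δ ^ 2 * Δ = K * Δ / δ ^ 2 + 2 * K * Δ / δ ^ 2 := by ring
              rw [h9]
              linarith
      calc |(wj - pj) * (a / b) + pj * ((a - c) / b + c * (d - b) / (b * d))|
          ≤ |(wj - pj) * (a / b)| + |pj * ((a - c) / b + c * (d - b) / (b * d))| :=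
            abs_add_le _ _
        _ ≤ (K * (Λ + s) / s) * (Λ' / Real.sqrt (nY (N+1))) / δ +
            pj * (3 * K / δ ^ 2 * Δ) := by
            refine add_le_add h4 ?_
            rw [abs_mul, abs_of_nonneg hpj0]
            exact mul_le_mul_of_nonneg_left h5 hpj0
    refine le_trans (Finset.sum_le_sum hterm) ?_
    rw [Finset.sum_add_distrib, Finset.sum_const, ← Finset.sum_mul, Finset.card_range,
      nsmul_eq_mul]
    have h1 : (∑ j ∈ Finset.range (m (N+1)), (P (A (N+1) j)).toReal) *
        (3 * K / (pbar (N+1) - Λ / s) ^ 2 * Δ) ≤ 3 * K / (pbar (N+1) - Λ / s) ^ 2 * Δ := by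
      refine mul_le_of_le_one_left (by positivity) (hsum_p (N+1) hNmem)
    linarith
  -- arithmetic facts about C and T
  have hC1 : ∀ N, N ∈ Finset.Icc 1 N₀ →
      1 ≤ 4 * mbar N * K / (pbar N - Λ / s) ^ 2 := by
    intro N hN
    have hδ0 := hδpos N hN
    have hδ1 := hδle1 N hN
    have hm := hmbar1 N hN
    rw [le_div_iff₀ (by positivity)]
    nlinarith
  have hT0 : ∀ N, N ∈ Finset.Icc 1 N₀ →
      0 ≤ Λ ^ 2 / s + Λ' * (Λ + s) / Real.sqrt (nbar N) := by
    intro N hN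
    have h1 : (0:ℝ) < Real.sqrt (nbar N) :=
      Real.sqrt_pos.2 (lt_of_lt_of_le one_pos (hnbar1 N hN))
    have h2 : (0:ℝ) ≤ Λ + s := by linarith
    exact add_nonneg (by positivity) (div_nonneg (mul_nonneg hΛ'0 h2) h1.le)
  have hTmono : ∀ N N', N ∈ Finset.Icc 1 N₀ → N' ∈ Finset.Icc 1 N₀ → N ≤ N' →
      Λ ^ 2 / s + Λ' * (Λ + s) / Real.sqrt (nbar N) ≤
        Λ ^ 2 / s + Λ' * (Λ + s) / Real.sqrt (nbar N') := by
    intro N N' hN hN' hNN'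
    have h1 : nbar N' ≤ nbar N := hnbar_anti N N' hN hN' hNN'
    have h2 : (0:ℝ) < Real.sqrt (nbar N') :=
      Real.sqrt_pos.2 (lt_of_lt_of_le one_pos (hnbar1 N' hN'))
    have h3 : Real.sqrt (nbar N') ≤ Real.sqrt (nbar N) := Real.sqrt_le_sqrt h1
    have h4 : (0:ℝ) ≤ Λ' * (Λ + s) := mul_nonneg hΛ'0 (by linarith)
    have h5 : Λ' * (Λ + s) / Real.sqrt (nbar N) ≤ Λ' * (Λ + s) / Real.sqrt (nbar N') :=
      div_le_div_of_nonneg_left h4 h2 h3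
    linarith
  have hCmono : ∀ N N', N ∈ Finset.Icc 1 N₀ → N' ∈ Finset.Icc 1 N₀ → N ≤ N' →
      4 * mbar N * K / (pbar N - Λ / s) ^ 2 ≤ 4 * mbar N' * K / (pbar N' - Λ / s) ^ 2 := by
    intro N N' hN hN' hNN'
    have h1 := hmbar_mono N N' hN hN' hNN'
    have h2 := hpbar_anti N N' hN hN' hNN'
    have h3 := hδpos N hN
    have h4 := hδpos N' hN'
    have h5 := hmbar1 N hN
    refine div_le_div₀ (by nlinarith) (by nlinarith) (by positivity) (by nlinarith)
  have hE : ∀ N, N ∈ Finset.Icc 1 N₀ →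
      (m N : ℝ) * ((K * (Λ + s) / s) * (Λ' / Real.sqrt (nY N)) / (pbar N - Λ / s)) ≤
        (4 * mbar N * K / (pbar N - Λ / s) ^ 2) *
          (Λ ^ 2 / s + Λ' * (Λ + s) / Real.sqrt (nbar N)) / s := by
    intro N hN
    have hδ0 := hδpos N hN
    have hδ1 := hδle1 N hN
    have hselfmem : N ∈ Finset.Icc 1 N := Finset.mem_Icc.2 ⟨(Finset.mem_Icc.1 hN).1, le_rfl⟩
    have hm : (m N : ℝ) ≤ mbar N := hmbar_ge N hN N hselfmem
    have hm0 : (0:ℝ) ≤ (m N : ℝ) := Nat.cast_nonneg _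
    have hnb0 : (0:ℝ) < Real.sqrt (nbar N) :=
      Real.sqrt_pos.2 (lt_of_lt_of_le one_pos (hnbar1 N hN))
    have hnY0 : (0:ℝ) < Real.sqrt (nY N) :=
      Real.sqrt_pos.2 (by exact_mod_cast hnY N hN)
    have hnle : Real.sqrt (nbar N) ≤ Real.sqrt (nY N) :=
      Real.sqrt_le_sqrt (hnbar_le N hN N hselfmem)
    have hΛs : (0:ℝ) ≤ Λ + s := by linarith
    have e1 : (m N : ℝ) * ((K * (Λ + s) / s) * (Λ' / Real.sqrt (nY N)) / (pbar N - Λ / s))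
        = ((m N : ℝ) * K * (Λ + s) * Λ') /
            (s * Real.sqrt (nY N) * (pbar N - Λ / s)) := by
      field_simp
    have e2 : (4 * mbar N * K / (pbar N - Λ / s) ^ 2) *
          (Λ' * (Λ + s) / Real.sqrt (nbar N)) / s
        = (4 * mbar N * K * (Λ' * (Λ + s))) /
            ((pbar N - Λ / s) ^ 2 * Real.sqrt (nbar N) * s) := by
      field_simp
    have hmbar0 : (0:ℝ) ≤ mbar N := le_trans zero_le_one (hmbar1 N hN)
    have hkey : (m N : ℝ) * (pbar N - Λ / s) * Real.sqrt (nbar N) ≤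
        (4 * mbar N) * Real.sqrt (nY N) := by
      have h1 : (m N : ℝ) * (pbar N - Λ / s) * Real.sqrt (nbar N) ≤
          (mbar N * 1) * Real.sqrt (nY N) :=
        mul_le_mul (mul_le_mul hm hδ1 hδ0.le hmbar0) hnle hnb0.le (by linarith [hmbar0])
      nlinarith [h1, mul_nonneg hmbar0 hnY0.le]
    have hmain : ((m N : ℝ) * K * (Λ + s) * Λ') /
          (s * Real.sqrt (nY N) * (pbar N - Λ / s)) ≤
        (4 * mbar N * K * (Λ' * (Λ + s))) /
          ((pbar N - Λ / s) ^ 2 * Real.sqrt (nbar N) * s) := by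
      rw [div_le_div_iff₀ (by positivity) (by positivity)]
      have hc : (0:ℝ) ≤ K * Λ' * (Λ + s) * s * (pbar N - Λ / s) :=
        mul_nonneg (mul_nonneg (mul_nonneg (mul_nonneg hK0.le hΛ'0) hΛs) hs.le) hδ0.le
      linarith [mul_le_mul_of_nonneg_left hkey hc]
    have hlast : (4 * mbar N * K / (pbar N - Λ / s) ^ 2) *
          (Λ' * (Λ + s) / Real.sqrt (nbar N)) / s ≤
        (4 * mbar N * K / (pbar N - Λ / s) ^ 2) *
          (Λ ^ 2 / s + Λ' * (Λ + s) / Real.sqrt (nbar N)) / s := by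
      refine (div_le_div_iff_of_pos_right hs).2 ?_
      refine mul_le_mul_of_nonneg_left ?_ (by positivity)
      have : (0:ℝ) ≤ Λ ^ 2 / s := by positivity
      linarith
    calc (m N : ℝ) * ((K * (Λ + s) / s) * (Λ' / Real.sqrt (nY N)) / (pbar N - Λ / s))
        = ((m N : ℝ) * K * (Λ + s) * Λ') /
            (s * Real.sqrt (nY N) * (pbar N - Λ / s)) := e1
      _ ≤ (4 * mbar N * K * (Λ' * (Λ + s))) /
            ((pbar N - Λ / s) ^ 2 * Real.sqrt (nbar N) * s) := hmain
      _ = (4 * mbar N * K / (pbar N - Λ / s) ^ 2) *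
            (Λ' * (Λ + s) / Real.sqrt (nbar N)) / s := e2.symm
      _ ≤ _ := hlast
  -- main induction
  have main : ∀ N, 1 ≤ N → N ≤ N₀ → ∀ f ∈ F,
      |Q N f - R N f| ≤
        (N : ℝ) * (4 * mbar N * K / (pbar N - Λ / s) ^ 2) ^ N *
          (Λ ^ 2 / s + Λ' * (Λ + s) / Real.sqrt (nbar N)) / s := by
    intro N hN1
    induction N, hN1 using Nat.le_induction with
    | base =>
      intro hle f hf
      have hprev0 : ∀ g ∈ F, |Q 0 g - R 0 g| ≤ 0 := by
        intro g hg
        rw [hQdef, hRdef]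
        simp [rakedMeas]
      have h := hstep 0 hle 0 le_rfl hprev0 f hf
      have hmem1 : 1 ∈ Finset.Icc 1 N₀ := Finset.mem_Icc.2 ⟨le_rfl, hle⟩
      have hE1 := hE 1 hmem1
      calc |Q 1 f - R 1 f| ≤ 3 * K / (pbar 1 - Λ / s) ^ 2 * 0 +
            (m 1 : ℝ) * ((K * (Λ + s) / s) * (Λ' / Real.sqrt (nY 1)) /
              (pbar 1 - Λ / s)) := h
        _ = (m 1 : ℝ) * ((K * (Λ + s) / s) * (Λ' / Real.sqrt (nY 1)) /
              (pbar 1 - Λ / s)) := by ring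
        _ ≤ (4 * mbar 1 * K / (pbar 1 - Λ / s) ^ 2) *
              (Λ ^ 2 / s + Λ' * (Λ + s) / Real.sqrt (nbar 1)) / s := hE1
        _ = ((1:ℕ) : ℝ) * (4 * mbar 1 * K / (pbar 1 - Λ / s) ^ 2) ^ (1:ℕ) *
              (Λ ^ 2 / s + Λ' * (Λ + s) / Real.sqrt (nbar 1)) / s := by
            push_cast
            ring
    | succ N hN1 ih =>
      intro hle f hf
      have hNle : N ≤ N₀ := by omega
      have hmemN : N ∈ Finset.Icc 1 N₀ := Finset.mem_Icc.2 ⟨hN1, hNle⟩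
      have hmemN1 : N + 1 ∈ Finset.Icc 1 N₀ := Finset.mem_Icc.2 ⟨Nat.le_add_left 1 N, hle⟩
      have hC0N : (0:ℝ) ≤ 4 * mbar N * K / (pbar N - Λ / s) ^ 2 :=
        le_trans zero_le_one (hC1 N hmemN)
      have hC0N1 : (0:ℝ) ≤ 4 * mbar (N+1) * K / (pbar (N+1) - Λ / s) ^ 2 :=
        le_trans zero_le_one (hC1 (N+1) hmemN1)
      have hΔ0 : 0 ≤ (N : ℝ) * (4 * mbar N * K / (pbar N - Λ / s) ^ 2) ^ N *
          (Λ ^ 2 / s + Λ' * (Λ + s) / Real.sqrt (nbar N)) / s :=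
        div_nonneg (mul_nonneg (mul_nonneg (Nat.cast_nonneg N)
          (pow_nonneg hC0N N)) (hT0 N hmemN)) hs.le
      have h := hstep N hle _ hΔ0 (ih hNle) f hf
      refine le_trans h ?_
      have hCm := hCmono N (N+1) hmemN hmemN1 (Nat.le_succ N)
      have hTm := hTmono N (N+1) hmemN hmemN1 (Nat.le_succ N)
      have h3C : 3 * K / (pbar (N+1) - Λ / s) ^ 2 ≤
          4 * mbar (N+1) * K / (pbar (N+1) - Λ / s) ^ 2 := by
        have h1 := hmbar1 (N+1) hmemN1
        have h2 := hδpos (N+1) hmemN1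
        refine (div_le_div_iff_of_pos_right (by positivity)).2 ?_
        nlinarith
      have hA : 3 * K / (pbar (N+1) - Λ / s) ^ 2 *
            ((N : ℝ) * (4 * mbar N * K / (pbar N - Λ / s) ^ 2) ^ N *
              (Λ ^ 2 / s + Λ' * (Λ + s) / Real.sqrt (nbar N)) / s) ≤
          (N : ℝ) * (4 * mbar (N+1) * K / (pbar (N+1) - Λ / s) ^ 2) ^ (N+1) *
            (Λ ^ 2 / s + Λ' * (Λ + s) / Real.sqrt (nbar (N+1))) / s := by
        have hinner : (N : ℝ) * (4 * mbar N * K / (pbar N - Λ / s) ^ 2) ^ N *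
              (Λ ^ 2 / s + Λ' * (Λ + s) / Real.sqrt (nbar N)) / s ≤
            (N : ℝ) * (4 * mbar (N+1) * K / (pbar (N+1) - Λ / s) ^ 2) ^ N *
              (Λ ^ 2 / s + Λ' * (Λ + s) / Real.sqrt (nbar (N+1))) / s := by
          refine (div_le_div_iff_of_pos_right hs).2 ?_
          refine mul_le_mul ?_ hTm (hT0 N hmemN)
            (mul_nonneg (Nat.cast_nonneg N) (pow_nonneg hC0N1 N))
          exact mul_le_mul_of_nonneg_left (pow_le_pow_left₀ hC0N hCm N) (Nat.cast_nonneg N)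
        calc 3 * K / (pbar (N+1) - Λ / s) ^ 2 *
              ((N : ℝ) * (4 * mbar N * K / (pbar N - Λ / s) ^ 2) ^ N *
                (Λ ^ 2 / s + Λ' * (Λ + s) / Real.sqrt (nbar N)) / s) ≤
            (4 * mbar (N+1) * K / (pbar (N+1) - Λ / s) ^ 2) *
              ((N : ℝ) * (4 * mbar (N+1) * K / (pbar (N+1) - Λ / s) ^ 2) ^ N *
                (Λ ^ 2 / s + Λ' * (Λ + s) / Real.sqrt (nbar (N+1))) / s) := by
              refine mul_le_mul h3C hinner hΔ0 hC0N1
          _ = (N : ℝ) * (4 * mbar (N+1) * K / (pbar (N+1) - Λ / s) ^ 2) ^ (N+1) *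
              (Λ ^ 2 / s + Λ' * (Λ + s) / Real.sqrt (nbar (N+1))) / s := by ring
      have hB2 : (m (N+1) : ℝ) * ((K * (Λ + s) / s) * (Λ' / Real.sqrt (nY (N+1))) /
            (pbar (N+1) - Λ / s)) ≤
          (4 * mbar (N+1) * K / (pbar (N+1) - Λ / s) ^ 2) ^ (N+1) *
            (Λ ^ 2 / s + Λ' * (Λ + s) / Real.sqrt (nbar (N+1))) / s := by
        refine le_trans (hE (N+1) hmemN1) ?_
        refine (div_le_div_iff_of_pos_right hs).2 ?_
        exact mul_le_mul_of_nonneg_right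
          (le_self_pow₀ (hC1 (N+1) hmemN1) (Nat.succ_ne_zero N)) (hT0 _ hmemN1)
      calc 3 * K / (pbar (N+1) - Λ / s) ^ 2 *
            ((N : ℝ) * (4 * mbar N * K / (pbar N - Λ / s) ^ 2) ^ N *
              (Λ ^ 2 / s + Λ' * (Λ + s) / Real.sqrt (nbar N)) / s) +
            (m (N+1) : ℝ) * ((K * (Λ + s) / s) * (Λ' / Real.sqrt (nY (N+1))) /
              (pbar (N+1) - Λ / s)) ≤
          (N : ℝ) * (4 * mbar (N+1) * K / (pbar (N+1) - Λ / s) ^ 2) ^ (N+1) *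
            (Λ ^ 2 / s + Λ' * (Λ + s) / Real.sqrt (nbar (N+1))) / s +
          (4 * mbar (N+1) * K / (pbar (N+1) - Λ / s) ^ 2) ^ (N+1) *
            (Λ ^ 2 / s + Λ' * (Λ + s) / Real.sqrt (nbar (N+1))) / s := add_le_add hA hB2
        _ = ((N + 1 : ℕ) : ℝ) * (4 * mbar (N+1) * K / (pbar (N+1) - Λ / s) ^ 2) ^ (N+1) *
            (Λ ^ 2 / s + Λ' * (Λ + s) / Real.sqrt (nbar (N+1))) / s := by
            push_cast
            ring
  intro N hN f hf
  have h1 := (Finset.mem_Icc.1 hN).1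
  have h2 := (Finset.mem_Icc.1 hN).2
  have h := main N h1 h2 f hf
  have heq : s * (Q N f - ∫ x, f x ∂P) - s * (R N f - ∫ x, f x ∂P) =
      s * (Q N f - R N f) := by ring
  rw [heq, abs_mul, abs_of_pos hs]
  calc s * |Q N f - R N f| ≤ s * ((N : ℝ) * (4 * mbar N * K / (pbar N - Λ / s) ^ 2) ^ N *
        (Λ ^ 2 / s + Λ' * (Λ + s) / Real.sqrt (nbar N)) / s) :=
        mul_le_mul_of_nonneg_left h hs.le
    _ = (N : ℝ) * (4 * mbar N * K / (pbar N - Λ / s) ^ 2) ^ N *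
        (Λ ^ 2 / s + Λ' * (Λ + s) / Real.sqrt (nbar N)) := by
        rw [mul_comm, div_mul_cancel₀ _ hs.ne']
end

section
/- Assume D := p_A·p_B·p_Ā·p_B̄ − (p_{AB} − p_A·p_B)² ≠ 0 and define C₁ = ( E[f|B]·(p_{AB} − p_A·p_B) − E[f|A]·p_A·p_B̄ − P(f)·(p_{AB} − p_A) ) / D and C₂ = ( E[f|A]·(p_{AB} − p_A·p_B) − E[f|B]·p_Ā·p_B − P(f)·(p_{AB} − p_B) ) / D. Then Var_P( f + p_B·C₁·1_A + p_A·C₂·1_B ) = Var_P(f) − p_A·p_B·( p_A·Δ_A² + p_B·Δ_B² − p_A·p_B·(Δ_A − Δ_B)² − 2·p_{AB}·Δ_A·Δ_B ) / D. (This is the asymptotic variance σ_f^(∞) of the stabilized raking-ratio Gaussian process for the two partitions {A,Aᶜ} and {B,Bᶜ}.) -/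
set_option maxHeartbeats 1600000


open MeasureTheory

/-- Asymptotic variance `σ_f^(∞)` of the stabilized raking-ratio Gaussian process for the
two partitions `{A, Aᶜ}` and `{B, Bᶜ}`:
`Var_P(f + p_B·C₁·1_A + p_A·C₂·1_B)
  = Var_P(f) − p_A p_B (p_A Δ_A² + p_B Δ_B² − p_A p_B (Δ_A − Δ_B)² − 2 p_{AB} Δ_A Δ_B)/D`. -/
theorem stmt_15 {𝒳 : Type*} [MeasurableSpace 𝒳] (P : Measure 𝒳) [IsProbabilityMeasure P]
    (f : 𝒳 → ℝ) (hf : Measurable f) (M : ℝ) (hfb : ∀ x, |f x| ≤ M)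
    (A B : Set 𝒳) (hA : MeasurableSet A) (hB : MeasurableSet B)
    (hA0 : 0 < P A) (hA1 : P A < 1) (hB0 : 0 < P B) (hB1 : P B < 1)
    (pA pAbar pB pBbar pAB Pf EfA EfB ΔA ΔB D C₁ C₂ : ℝ)
    (hpA : pA = (P A).toReal) (hpAbar : pAbar = (P Aᶜ).toReal)
    (hpB : pB = (P B).toReal) (hpBbar : pBbar = (P Bᶜ).toReal)
    (hpAB : pAB = (P (A ∩ B)).toReal)
    (hPf : Pf = ∫ x, f x ∂P)
    (hEfA : EfA = (∫ x, f x * A.indicator (1 : 𝒳 → ℝ) x ∂P) / pA)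
    (hEfB : EfB = (∫ x, f x * B.indicator (1 : 𝒳 → ℝ) x ∂P) / pB)
    (hΔA : ΔA = EfA - Pf) (hΔB : ΔB = EfB - Pf)
    (hD : D = pA * pB * pAbar * pBbar - (pAB - pA * pB) ^ 2) (hD0 : D ≠ 0)
    (hC₁ : C₁ = (EfB * (pAB - pA * pB) - EfA * pA * pBbar - Pf * (pAB - pA)) / D)
    (hC₂ : C₂ = (EfA * (pAB - pA * pB) - EfB * pAbar * pB - Pf * (pAB - pB)) / D) :
    (∫ x, (f x + pB * C₁ * A.indicator (1 : 𝒳 → ℝ) x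
            + pA * C₂ * B.indicator (1 : 𝒳 → ℝ) x) ^ 2 ∂P)
        - (∫ x, (f x + pB * C₁ * A.indicator (1 : 𝒳 → ℝ) x
            + pA * C₂ * B.indicator (1 : 𝒳 → ℝ) x) ∂P) ^ 2
      = ((∫ x, f x ^ 2 ∂P) - (∫ x, f x ∂P) ^ 2)
        - pA * pB * (pA * ΔA ^ 2 + pB * ΔB ^ 2 - pA * pB * (ΔA - ΔB) ^ 2
            - 2 * pAB * ΔA * ΔB) / D := by
  set iA : 𝒳 → ℝ := A.indicator (1 : 𝒳 → ℝ) with hiAdef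
  set iB : 𝒳 → ℝ := B.indicator (1 : 𝒳 → ℝ) with hiBdef
  set iAB : 𝒳 → ℝ := (A ∩ B).indicator (1 : 𝒳 → ℝ) with hiABdef
  set a : ℝ := pB * C₁ with ha
  set b : ℝ := pA * C₂ with hb
  -- integrability
  have intf : Integrable f P :=
    ⟨hf.aestronglyMeasurable, HasFiniteIntegral.of_bounded (C := M)
      (Filter.Eventually.of_forall fun x => by simpa using hfb x)⟩
  have intf2 : Integrable (fun x => f x ^ 2) P :=
    ⟨(hf.pow_const 2).aestronglyMeasurable, HasFiniteIntegral.of_bounded (C := M ^ 2)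
      (Filter.Eventually.of_forall fun x => by
        simp only [Real.norm_eq_abs, abs_pow]
        exact pow_le_pow_left₀ (abs_nonneg _) (hfb x) 2)⟩
  have intiA : Integrable iA P := (integrable_const (1 : ℝ)).indicator hA
  have intiB : Integrable iB P := (integrable_const (1 : ℝ)).indicator hB
  have intiAB : Integrable iAB P := (integrable_const (1 : ℝ)).indicator (hA.inter hB)
  have intfiA : Integrable (fun x => f x * iA x) P :=
    intiA.bdd_mul hf.aestronglyMeasurable (Filter.Eventually.of_forall fun x => by simpa using hfb x)
  have intfiB : Integrable (fun x => f x * iB x) P :=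
    intiB.bdd_mul hf.aestronglyMeasurable (Filter.Eventually.of_forall fun x => by simpa using hfb x)
  -- indicator algebra
  have hiA2 : ∀ x, iA x * iA x = iA x := by
    intro x; by_cases h : x ∈ A <;> simp [hiAdef, Set.indicator_apply, h]
  have hiB2 : ∀ x, iB x * iB x = iB x := by
    intro x; by_cases h : x ∈ B <;> simp [hiBdef, Set.indicator_apply, h]
  have hiABmul : ∀ x, iA x * iB x = iAB x := by
    intro x
    by_cases h1 : x ∈ A <;> by_cases h2 : x ∈ B <;>
      simp [hiAdef, hiBdef, hiABdef, Set.indicator_apply, h1, h2]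
  -- basic integrals
  have hIiA : ∫ x, iA x ∂P = pA := by rw [hpA, hiAdef]; exact integral_indicator_one hA
  have hIiB : ∫ x, iB x ∂P = pB := by rw [hpB, hiBdef]; exact integral_indicator_one hB
  have hIiAB : ∫ x, iAB x ∂P = pAB := by
    rw [hpAB, hiABdef]; exact integral_indicator_one (hA.inter hB)
  have hpA0 : 0 < pA := by
    rw [hpA]; exact ENNReal.toReal_pos hA0.ne' (hA1.trans ENNReal.one_lt_top).ne
  have hpB0 : 0 < pB := by
    rw [hpB]; exact ENNReal.toReal_pos hB0.ne' (hB1.trans ENNReal.one_lt_top).ne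
  have hIA : ∫ x, f x * iA x ∂P = EfA * pA := by
    rw [hEfA]; field_simp
  have hIB : ∫ x, f x * iB x ∂P = EfB * pB := by
    rw [hEfB]; field_simp
  -- complements
  have hAbar : pAbar = 1 - pA := by
    rw [hpAbar, hpA, measure_compl hA (measure_ne_top P A), measure_univ,
      ENNReal.toReal_sub_of_le hA1.le ENNReal.one_ne_top, ENNReal.toReal_one]
  have hBbar : pBbar = 1 - pB := by
    rw [hpBbar, hpB, measure_compl hB (measure_ne_top P B), measure_univ,
      ENNReal.toReal_sub_of_le hB1.le ENNReal.one_ne_top, ENNReal.toReal_one]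
  -- first moment
  have i1 : Integrable (fun x => f x + a * iA x) P := intf.add (intiA.const_mul a)
  have hg1 : (∫ x, (f x + a * iA x + b * iB x) ∂P) = Pf + a * pA + b * pB := by
    rw [integral_add i1 (intiB.const_mul b),
      integral_add intf (intiA.const_mul a), integral_const_mul, integral_const_mul,
      hIiA, hIiB, hPf]
  -- second moment
  have hsq : ∀ x, (f x + a * iA x + b * iB x) ^ 2
      = f x ^ 2 + (2 * a) * (f x * iA x) + (2 * b) * (f x * iB x)
        + a ^ 2 * iA x + b ^ 2 * iB x + (2 * a * b) * iAB x := by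
    intro x
    rw [← hiABmul x]
    nlinarith [hiA2 x, hiB2 x]
  have hg2 : (∫ x, (f x + a * iA x + b * iB x) ^ 2 ∂P)
      = (∫ x, f x ^ 2 ∂P) + (2 * a) * (EfA * pA) + (2 * b) * (EfB * pB)
        + a ^ 2 * pA + b ^ 2 * pB + (2 * a * b) * pAB := by
    have h1 : Integrable (fun x => f x ^ 2 + 2 * a * (f x * iA x)) P :=
      intf2.add (intfiA.const_mul (2 * a))
    have h2 : Integrable (fun x => f x ^ 2 + 2 * a * (f x * iA x) + 2 * b * (f x * iB x)) P :=
      h1.add (intfiB.const_mul (2 * b))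
    have h3 : Integrable (fun x => f x ^ 2 + 2 * a * (f x * iA x) + 2 * b * (f x * iB x)
        + a ^ 2 * iA x) P := h2.add (intiA.const_mul (a ^ 2))
    have h4 : Integrable (fun x => f x ^ 2 + 2 * a * (f x * iA x) + 2 * b * (f x * iB x)
        + a ^ 2 * iA x + b ^ 2 * iB x) P := h3.add (intiB.const_mul (b ^ 2))
    calc (∫ x, (f x + a * iA x + b * iB x) ^ 2 ∂P)
        = ∫ x, (f x ^ 2 + (2 * a) * (f x * iA x) + (2 * b) * (f x * iB x)
            + a ^ 2 * iA x + b ^ 2 * iB x + (2 * a * b) * iAB x) ∂P := by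
          exact integral_congr_ae (Filter.Eventually.of_forall fun x => hsq x)
      _ = _ := by
          rw [integral_add h4 (intiAB.const_mul (2 * a * b)),
            integral_add h3 (intiB.const_mul (b ^ 2)),
            integral_add h2 (intiA.const_mul (a ^ 2)),
            integral_add h1 (intfiB.const_mul (2 * b)),
            integral_add intf2 (intfiA.const_mul (2 * a)),
            integral_const_mul, integral_const_mul, integral_const_mul,
            integral_const_mul, integral_const_mul,
            hIA, hIB, hIiA, hIiB, hIiAB]
  rw [hg1, hg2, ← hPf]
  subst hAbar hBbar hΔA hΔB hD
  have h1 : pA * (1 - pA) * a + (pAB - pA * pB) * b = -(pA * (EfA - Pf)) := by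
    rw [ha, hb, hC₁, hC₂]
    linear_combination (-(pA * (EfA - Pf))) * mul_inv_cancel₀ hD0
  have h2 : (pAB - pA * pB) * a + pB * (1 - pB) * b = -(pB * (EfB - Pf)) := by
    rw [ha, hb, hC₁, hC₂]
    linear_combination (-(pB * (EfB - Pf))) * mul_inv_cancel₀ hD0
  have h4 : pA * pB * (pA * (EfA - Pf) ^ 2 + pB * (EfB - Pf) ^ 2
        - pA * pB * (EfA - Pf - (EfB - Pf)) ^ 2
        - 2 * pAB * (EfA - Pf) * (EfB - Pf))
        / (pA * pB * (1 - pA) * (1 - pB) - (pAB - pA * pB) ^ 2)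
      = -(a * (pA * (EfA - Pf)) + b * (pB * (EfB - Pf))) := by
    rw [div_eq_iff hD0, ha, hb, hC₁, hC₂]
    linear_combination (-(pA * pB * (pA * (EfA - Pf) ^ 2 + pB * (EfB - Pf) ^ 2
        - pA * pB * (EfA - Pf - (EfB - Pf)) ^ 2
        - 2 * pAB * (EfA - Pf) * (EfB - Pf)))) * mul_inv_cancel₀ hD0
  rw [h4]
  linear_combination a * h1 + b * h2
end

section
/- If moreover P(A ∩ B) = P(A)·P(B), then Var_P( f − (Δ_A/p_Ā)·1_A − (Δ_B/p_B̄)·1_B ) = Var_P(f) − (p_A/p_Ā)·Δ_A² − (p_B/p_B̄)·Δ_B². (This is the asymptotic variance σ_f^(∞) of the stabilized raking-ratio Gaussian process when A and B are independent.) -/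
open MeasureTheory

set_option maxHeartbeats 1000000 in
/-- Asymptotic variance `σ_f^(∞)` of the stabilized raking-ratio Gaussian process for the
two partitions `{A, Aᶜ}` and `{B, Bᶜ}` when `A` and `B` are independent:
`Var_P(f − (Δ_A/p_Ā)·1_A − (Δ_B/p_B̄)·1_B) = Var_P(f) − (p_A/p_Ā)Δ_A² − (p_B/p_B̄)Δ_B²`. -/
theorem stmt_16 {𝒳 : Type*} [MeasurableSpace 𝒳] (P : Measure 𝒳) [IsProbabilityMeasure P]
    (f : 𝒳 → ℝ) (hf : Measurable f) (M : ℝ) (hfb : ∀ x, |f x| ≤ M)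
    (A B : Set 𝒳) (hA : MeasurableSet A) (hB : MeasurableSet B)
    (hA0 : 0 < P A) (hA1 : P A < 1) (hB0 : 0 < P B) (hB1 : P B < 1)
    (hindep : P (A ∩ B) = P A * P B)
    (pA pAbar pB pBbar Pf EfA EfB ΔA ΔB : ℝ)
    (hpA : pA = (P A).toReal) (hpAbar : pAbar = (P Aᶜ).toReal)
    (hpB : pB = (P B).toReal) (hpBbar : pBbar = (P Bᶜ).toReal)
    (hPf : Pf = ∫ x, f x ∂P)
    (hEfA : EfA = (∫ x, f x * A.indicator (1 : 𝒳 → ℝ) x ∂P) / pA)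
    (hEfB : EfB = (∫ x, f x * B.indicator (1 : 𝒳 → ℝ) x ∂P) / pB)
    (hΔA : ΔA = EfA - Pf) (hΔB : ΔB = EfB - Pf) :
    (∫ x, (f x - ΔA / pAbar * A.indicator (1 : 𝒳 → ℝ) x
            - ΔB / pBbar * B.indicator (1 : 𝒳 → ℝ) x) ^ 2 ∂P)
        - (∫ x, (f x - ΔA / pAbar * A.indicator (1 : 𝒳 → ℝ) x
            - ΔB / pBbar * B.indicator (1 : 𝒳 → ℝ) x) ∂P) ^ 2
      = ((∫ x, f x ^ 2 ∂P) - (∫ x, f x ∂P) ^ 2)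
        - pA / pAbar * ΔA ^ 2 - pB / pBbar * ΔB ^ 2 := by
  set a : ℝ := ΔA / pAbar with ha
  set b : ℝ := ΔB / pBbar with hb
  -- basic real facts about probabilities
  have hpA0 : 0 < pA := by
    rw [hpA]; exact ENNReal.toReal_pos hA0.ne' (measure_ne_top _ _)
  have hpB0 : 0 < pB := by
    rw [hpB]; exact ENNReal.toReal_pos hB0.ne' (measure_ne_top _ _)
  have hcomplA : pAbar = 1 - pA := by
    rw [hpAbar, hpA, measure_compl hA (measure_ne_top _ _), measure_univ,
      ENNReal.toReal_sub_of_le hA1.le ENNReal.one_ne_top, ENNReal.toReal_one]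
  have hcomplB : pBbar = 1 - pB := by
    rw [hpBbar, hpB, measure_compl hB (measure_ne_top _ _), measure_univ,
      ENNReal.toReal_sub_of_le hB1.le ENNReal.one_ne_top, ENNReal.toReal_one]
  have hpAbar0 : 0 < pAbar := by
    rw [hcomplA]
    have : pA < 1 := by
      rw [hpA]
      have := ENNReal.toReal_lt_toReal (measure_ne_top P A) ENNReal.one_ne_top |>.mpr hA1
      simpa using this
    linarith
  have hpBbar0 : 0 < pBbar := by
    rw [hcomplB]
    have : pB < 1 := by
      rw [hpB]
      have := ENNReal.toReal_lt_toReal (measure_ne_top P B) ENNReal.one_ne_top |>.mpr hB1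
      simpa using this
    linarith
  -- integrability
  have hfi : Integrable f P :=
    (integrable_const M).mono' hf.aestronglyMeasurable (ae_of_all _ fun x => by
      simpa using hfb x)
  have hf2i : Integrable (fun x => f x ^ 2) P := by
    refine (integrable_const (M ^ 2)).mono' ((hf.pow_const 2).aestronglyMeasurable)
      (ae_of_all _ fun x => ?_)
    have h1 := hfb x
    have h2 : (0:ℝ) ≤ |f x| := abs_nonneg _
    simp only [Real.norm_eq_abs, abs_pow, sq_abs]
    calc f x ^ 2 = |f x| ^ 2 := by rw [sq_abs]
    _ ≤ M ^ 2 := by nlinarith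
  have hIA : Integrable (fun x => A.indicator (1 : 𝒳 → ℝ) x) P :=
    (integrable_const 1).indicator hA
  have hIB : Integrable (fun x => B.indicator (1 : 𝒳 → ℝ) x) P :=
    (integrable_const 1).indicator hB
  have hIAB : Integrable (fun x => (A ∩ B).indicator (1 : 𝒳 → ℝ) x) P :=
    (integrable_const 1).indicator (hA.inter hB)
  have hfA : Integrable (fun x => A.indicator f x) P := hfi.indicator hA
  have hfB : Integrable (fun x => B.indicator f x) P := hfi.indicator hB
  -- values of indicator integrals
  have hIAv : ∫ x, A.indicator (1 : 𝒳 → ℝ) x ∂P = pA := by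
    rw [integral_indicator_one hA, hpA, measureReal_def]
  have hIBv : ∫ x, B.indicator (1 : 𝒳 → ℝ) x ∂P = pB := by
    rw [integral_indicator_one hB, hpB, measureReal_def]
  have hIABv : ∫ x, (A ∩ B).indicator (1 : 𝒳 → ℝ) x ∂P = pA * pB := by
    rw [integral_indicator_one (hA.inter hB), measureReal_def, hindep, ENNReal.toReal_mul, hpA, hpB]
  -- conditional-expectation type integrals
  have hfAv : ∫ x, A.indicator f x ∂P = EfA * pA := by
    have h : (∫ x, f x * A.indicator (1 : 𝒳 → ℝ) x ∂P) = ∫ x, A.indicator f x ∂P := by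
      refine integral_congr_ae (ae_of_all _ fun x => ?_)
      by_cases hx : x ∈ A <;> simp [Set.indicator_apply, hx]
    rw [hEfA, h]
    field_simp
  have hfBv : ∫ x, B.indicator f x ∂P = EfB * pB := by
    have h : (∫ x, f x * B.indicator (1 : 𝒳 → ℝ) x ∂P) = ∫ x, B.indicator f x ∂P := by
      refine integral_congr_ae (ae_of_all _ fun x => ?_)
      by_cases hx : x ∈ B <;> simp [Set.indicator_apply, hx]
    rw [hEfB, h]
    field_simp
  -- first moment
  have h1i : Integrable (fun x => f x - a * A.indicator (1 : 𝒳 → ℝ) x) P :=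
    hfi.sub (hIA.const_mul a)
  have h2i : Integrable (fun x => b * B.indicator (1 : 𝒳 → ℝ) x) P := hIB.const_mul b
  have hI1 : (∫ x, (f x - a * A.indicator (1 : 𝒳 → ℝ) x
      - b * B.indicator (1 : 𝒳 → ℝ) x) ∂P) = Pf - a * pA - b * pB := by
    rw [integral_sub h1i h2i, integral_sub hfi (hIA.const_mul a),
      integral_const_mul _ _, integral_const_mul _ _, hIAv, hIBv, hPf]
  -- second moment
  have hg1i : Integrable (fun x => f x ^ 2 + (a ^ 2 * A.indicator (1 : 𝒳 → ℝ) x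
      + b ^ 2 * B.indicator (1 : 𝒳 → ℝ) x
      + 2 * a * b * (A ∩ B).indicator (1 : 𝒳 → ℝ) x)) P :=
    hf2i.add (((hIA.const_mul _).add (hIB.const_mul _)).add (hIAB.const_mul _))
  have hg2i : Integrable (fun x => 2 * a * A.indicator f x + 2 * b * B.indicator f x) P :=
    (hfA.const_mul _).add (hfB.const_mul _)
  have hI2 : (∫ x, (f x - a * A.indicator (1 : 𝒳 → ℝ) x
      - b * B.indicator (1 : 𝒳 → ℝ) x) ^ 2 ∂P)
      = (∫ x, f x ^ 2 ∂P) - 2 * a * (EfA * pA) - 2 * b * (EfB * pB)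
        + a ^ 2 * pA + b ^ 2 * pB + 2 * a * b * (pA * pB) := by
    have hptw : ∀ x, (f x - a * A.indicator (1 : 𝒳 → ℝ) x
        - b * B.indicator (1 : 𝒳 → ℝ) x) ^ 2
        = (f x ^ 2 + (a ^ 2 * A.indicator (1 : 𝒳 → ℝ) x
            + b ^ 2 * B.indicator (1 : 𝒳 → ℝ) x
            + 2 * a * b * (A ∩ B).indicator (1 : 𝒳 → ℝ) x))
          - (2 * a * A.indicator f x + 2 * b * B.indicator f x) := by
      intro x
      by_cases hxA : x ∈ A <;> by_cases hxB : x ∈ B <;>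
        simp [Set.indicator_apply, hxA, hxB] <;> ring
    have i1 : Integrable (fun x => a ^ 2 * A.indicator (1 : 𝒳 → ℝ) x) P := hIA.const_mul _
    have i2 : Integrable (fun x => b ^ 2 * B.indicator (1 : 𝒳 → ℝ) x) P := hIB.const_mul _
    have i3 : Integrable (fun x => 2 * a * b * (A ∩ B).indicator (1 : 𝒳 → ℝ) x) P :=
      hIAB.const_mul _
    have i12 : Integrable (fun x => a ^ 2 * A.indicator (1 : 𝒳 → ℝ) x
        + b ^ 2 * B.indicator (1 : 𝒳 → ℝ) x) P := i1.add i2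
    have i123 : Integrable (fun x => a ^ 2 * A.indicator (1 : 𝒳 → ℝ) x
        + b ^ 2 * B.indicator (1 : 𝒳 → ℝ) x
        + 2 * a * b * (A ∩ B).indicator (1 : 𝒳 → ℝ) x) P := i12.add i3
    have j1 : Integrable (fun x => 2 * a * A.indicator f x) P := hfA.const_mul _
    have j2 : Integrable (fun x => 2 * b * B.indicator f x) P := hfB.const_mul _
    rw [integral_congr_ae (ae_of_all _ hptw), integral_sub hg1i hg2i,
      integral_add hf2i i123, integral_add i12 i3, integral_add i1 i2, integral_add j1 j2,
      integral_const_mul _ _, integral_const_mul _ _, integral_const_mul _ _,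
      integral_const_mul _ _, integral_const_mul _ _,
      hIAv, hIBv, hIABv, hfAv, hfBv]
    ring
  have haA : a * pAbar = ΔA := by rw [ha]; field_simp
  have hbB : b * pBbar = ΔB := by rw [hb]; field_simp
  have hRA : pA / pAbar * ΔA ^ 2 = pA * a ^ 2 * pAbar := by
    rw [← haA]; field_simp
  have hRB : pB / pBbar * ΔB ^ 2 = pB * b ^ 2 * pBbar := by
    rw [← hbB]; field_simp
  have hEA : EfA = a * pAbar + Pf := by rw [hΔA] at haA; linarith
  have hEB : EfB = b * pBbar + Pf := by rw [hΔB] at hbB; linarith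
  rw [hI1, hI2, hRA, hRB, hEA, hEB, ← hPf, hcomplA, hcomplB]
  ring
end

section
/- Let M₁ be the 2×2 real matrix with rows (p_{AB}/p_B, 1 − p_{AB}/p_B) and ((p_A − p_{AB})/p_B̄, 1 − (p_A − p_{AB})/p_B̄), and M₂ the 2×2 real matrix with rows (p_{AB}/p_A, 1 − p_{AB}/p_A) and ((p_B − p_{AB})/p_Ā, 1 − (p_B − p_{AB})/p_Ā). Then the characteristic polynomial of the product M₁·M₂ is (X − 1)·(X − T) with T = (p_{AB} − p_A·p_B)²/(p_A·p_Ā·p_B·p_B̄); in particular the eigenvalues of M₁·M₂ are 1 and T. -/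
open Polynomial

lemma charpoly_fin_two' (A : Matrix (Fin 2) (Fin 2) ℝ) :
    A.charpoly = X ^ 2 - C A.trace * X + C A.det := by
  rw [Matrix.charpoly, Matrix.det_fin_two, Matrix.charmatrix_apply_eq,
    Matrix.charmatrix_apply_eq, Matrix.charmatrix_apply_ne _ _ _ (by decide),
    Matrix.charmatrix_apply_ne _ _ _ (by decide), Matrix.trace_fin_two, Matrix.det_fin_two]
  simp only [map_add, map_mul, map_sub]
  ring

/-- The product of the two conditional-probability matrices `P_{𝒜|ℬ}` and `P_{ℬ|𝒜}` has
characteristic polynomial `(X − 1)(X − T)` with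
`T = (p_{AB} − p_A p_B)²/(p_A p_Ā p_B p_B̄)`; in particular its eigenvalues are `1` and `T`. -/
theorem stmt_17 (pA pB pAB : ℝ) (hA0 : 0 < pA) (hA1 : pA < 1) (hB0 : 0 < pB) (hB1 : pB < 1)
    (M₁ M₂ : Matrix (Fin 2) (Fin 2) ℝ) (T : ℝ)
    (hM₁ : M₁ = !![pAB / pB, 1 - pAB / pB;
                   (pA - pAB) / (1 - pB), 1 - (pA - pAB) / (1 - pB)])
    (hM₂ : M₂ = !![pAB / pA, 1 - pAB / pA;
                   (pB - pAB) / (1 - pA), 1 - (pB - pAB) / (1 - pA)])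
    (hT : T = (pAB - pA * pB) ^ 2 / (pA * (1 - pA) * pB * (1 - pB))) :
    (M₁ * M₂).charpoly = (X - C 1) * (X - C T) ∧
      spectrum ℝ (M₁ * M₂) = {1, T} := by
  have hA : pA ≠ 0 := ne_of_gt hA0
  have hA' : (1 : ℝ) - pA ≠ 0 := by linarith
  have hB : pB ≠ 0 := ne_of_gt hB0
  have hB' : (1 : ℝ) - pB ≠ 0 := by linarith
  set M := M₁ * M₂ with hM
  have htr : M.trace = 1 + T := by
    rw [hM, hM₁, hM₂, Matrix.mul_fin_two, Matrix.trace_fin_two_of, hT]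
    field_simp
    ring
  have hdet : M.det = T := by
    rw [hM, Matrix.det_mul, hM₁, hM₂, Matrix.det_fin_two_of, Matrix.det_fin_two_of, hT]
    field_simp
    ring
  have hcp : M.charpoly = (X - C 1) * (X - C T) := by
    rw [charpoly_fin_two', htr, hdet]
    simp only [map_add, map_one]
    ring
  refine ⟨hcp, ?_⟩
  have key : ∀ μ : ℝ, ((algebraMap ℝ (Matrix (Fin 2) (Fin 2) ℝ)) μ - M).det
      = (μ - 1) * (μ - T) := by
    intro μ
    have hform : (algebraMap ℝ (Matrix (Fin 2) (Fin 2) ℝ)) μ - M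
        = !![μ - M 0 0, -M 0 1; -M 1 0, μ - M 1 1] := by
      ext i j
      fin_cases i <;> fin_cases j <;>
        simp [Matrix.algebraMap_matrix_apply]
    rw [hform, Matrix.det_fin_two_of]
    have e1 : M 0 0 + M 1 1 = 1 + T := by rw [← Matrix.trace_fin_two]; exact htr
    have e2 : M 0 0 * M 1 1 - M 0 1 * M 1 0 = T := by rw [← Matrix.det_fin_two]; exact hdet
    linear_combination (-μ) * e1 + e2
  ext μ
  simp only [spectrum.mem_iff, Matrix.isUnit_iff_isUnit_det, isUnit_iff_ne_zero, not_not,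
    key, Set.mem_insert_iff, Set.mem_singleton_iff, mul_eq_zero, sub_eq_zero]
end

section
/- Let s = P(f)·(p_A − p_{AB}) − E[f|A]·p_A·p_B̄ + E[f|B]·(p_{AB} − p_A·p_B). Then E[f|A] − P(B|A)·E[f|B] − P(Bᶜ|A)·E[f|Bᶜ] = −s/(p_A·p_B̄) and E[f|Aᶜ] − P(B|Aᶜ)·E[f|B] − P(Bᶜ|Aᶜ)·E[f|Bᶜ] = s/(p_Ā·p_B̄); that is, the vector V₁(f) = (E[f|A], E[f|Aᶜ]) − P_{ℬ|𝒜}·(E[f|B], E[f|Bᶜ]) equals s·(−1/(p_A·p_B̄), 1/(p_Ā·p_B̄)). -/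
open MeasureTheory

/-- The vector `V₁(f) = (E[f|A], E[f|Aᶜ]) − P_{ℬ|𝒜}·(E[f|B], E[f|Bᶜ])` equals
`s·(−1/(p_A p_B̄), 1/(p_Ā p_B̄))` with
`s = P(f)(p_A − p_{AB}) − E[f|A] p_A p_B̄ + E[f|B](p_{AB} − p_A p_B)`, stated componentwise. -/
theorem stmt_18 {𝒳 : Type*} [MeasurableSpace 𝒳] (P : Measure 𝒳) [IsProbabilityMeasure P]
    (f : 𝒳 → ℝ) (hf : Measurable f) (M : ℝ) (hfb : ∀ x, |f x| ≤ M)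
    (A B : Set 𝒳) (hA : MeasurableSet A) (hB : MeasurableSet B)
    (hA0 : 0 < P A) (hA1 : P A < 1) (hB0 : 0 < P B) (hB1 : P B < 1)
    (pA pAbar pB pBbar pAB Pf EfA EfAc EfB EfBc s : ℝ)
    (hpA : pA = (P A).toReal) (hpAbar : pAbar = (P Aᶜ).toReal)
    (hpB : pB = (P B).toReal) (hpBbar : pBbar = (P Bᶜ).toReal)
    (hpAB : pAB = (P (A ∩ B)).toReal)
    (hPf : Pf = ∫ x, f x ∂P)
    (hEfA : EfA = (∫ x, f x * A.indicator (1 : 𝒳 → ℝ) x ∂P) / pA)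
    (hEfAc : EfAc = (∫ x, f x * Aᶜ.indicator (1 : 𝒳 → ℝ) x ∂P) / pAbar)
    (hEfB : EfB = (∫ x, f x * B.indicator (1 : 𝒳 → ℝ) x ∂P) / pB)
    (hEfBc : EfBc = (∫ x, f x * Bᶜ.indicator (1 : 𝒳 → ℝ) x ∂P) / pBbar)
    (hs : s = Pf * (pA - pAB) - EfA * pA * pBbar + EfB * (pAB - pA * pB)) :
    EfA - (P (B ∩ A)).toReal / pA * EfB - (P (Bᶜ ∩ A)).toReal / pA * EfBc
        = -s / (pA * pBbar) ∧
      EfAc - (P (B ∩ Aᶜ)).toReal / pAbar * EfB - (P (Bᶜ ∩ Aᶜ)).toReal / pAbar * EfBc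
        = s / (pAbar * pBbar) := by
  have hμ : ∀ C : Set 𝒳, P C ≠ ⊤ := fun C => measure_ne_top P C
  -- positivity of the probabilities
  have hAc0 : 0 < P Aᶜ := by
    rw [prob_compl_eq_one_sub hA]
    exact tsub_pos_of_lt hA1
  have hBc0 : 0 < P Bᶜ := by
    rw [prob_compl_eq_one_sub hB]
    exact tsub_pos_of_lt hB1
  have hpA0 : pA ≠ 0 := by rw [hpA]; exact (ENNReal.toReal_pos hA0.ne' (hμ A)).ne'
  have hpB0 : pB ≠ 0 := by rw [hpB]; exact (ENNReal.toReal_pos hB0.ne' (hμ B)).ne'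
  have hpAbar0 : pAbar ≠ 0 := by
    rw [hpAbar]; exact (ENNReal.toReal_pos hAc0.ne' (hμ Aᶜ)).ne'
  have hpBbar0 : pBbar ≠ 0 := by
    rw [hpBbar]; exact (ENNReal.toReal_pos hBc0.ne' (hμ Bᶜ)).ne'
  -- measure decompositions
  have hBbar : pBbar = 1 - pB := by
    rw [hpBbar, hpB, prob_compl_eq_one_sub hB,
      ENNReal.toReal_sub_of_le prob_le_one ENNReal.one_ne_top, ENNReal.toReal_one]
  have hBA : (P (B ∩ A)).toReal = pAB := by rw [Set.inter_comm, hpAB]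
  have hBcA : (P (Bᶜ ∩ A)).toReal = pA - pAB := by
    have h := measure_inter_add_diff A hB (μ := P)
    have hset : Bᶜ ∩ A = A \ B := by ext x; simp [Set.mem_diff, and_comm]
    have := congrArg ENNReal.toReal h
    rw [ENNReal.toReal_add (hμ _) (hμ _)] at this
    rw [hset, hpA, hpAB]; linarith
  have hBAc : (P (B ∩ Aᶜ)).toReal = pB - pAB := by
    have h := measure_inter_add_diff B hA (μ := P)
    have hset : B ∩ Aᶜ = B \ A := by ext x; simp [Set.mem_diff]
    have h2 := congrArg ENNReal.toReal h
    rw [ENNReal.toReal_add (hμ _) (hμ _), Set.inter_comm] at h2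
    rw [hset, hpB, hpAB]
    linarith
  have hBcAc : (P (Bᶜ ∩ Aᶜ)).toReal = pBbar - (pA - pAB) := by
    have h := measure_inter_add_diff Bᶜ hA (μ := P)
    have hset : Bᶜ ∩ Aᶜ = Bᶜ \ A := by ext x; simp [Set.mem_diff]
    have h2 := congrArg ENNReal.toReal h
    rw [ENNReal.toReal_add (hμ _) (hμ _)] at h2
    have hset2 : Bᶜ ∩ A = A ∩ Bᶜ := Set.inter_comm _ _
    rw [hset2] at h2
    rw [hset2] at hBcA
    rw [hset]
    linarith [hpBbar, hBcA]
  -- integrability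
  have hintC : ∀ C : Set 𝒳, MeasurableSet C →
      Integrable (fun x => f x * C.indicator (1 : 𝒳 → ℝ) x) P := by
    intro C hC
    refine Integrable.mono' (integrable_const M)
      ((hf.mul ((measurable_const.indicator hC))).aestronglyMeasurable) ?_
    filter_upwards with x
    by_cases hx : x ∈ C <;>
      simp [hx, Real.norm_eq_abs, abs_mul] <;>
      · have := hfb x; have : (0:ℝ) ≤ |f x| := abs_nonneg _; linarith [hfb x]
  -- splitting the integral
  have key : ∀ C : Set 𝒳, MeasurableSet C →
      (∫ x, f x * C.indicator (1 : 𝒳 → ℝ) x ∂P)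
        + (∫ x, f x * Cᶜ.indicator (1 : 𝒳 → ℝ) x ∂P) = ∫ x, f x ∂P := by
    intro C hC
    rw [← integral_add (hintC C hC) (hintC Cᶜ hC.compl)]
    apply integral_congr_ae
    filter_upwards with x
    by_cases hx : x ∈ C <;> simp [hx]
  have keyA := key A hA
  have keyB := key B hB
  set IA := ∫ x, f x * A.indicator (1 : 𝒳 → ℝ) x ∂P with hIA
  set IAc := ∫ x, f x * Aᶜ.indicator (1 : 𝒳 → ℝ) x ∂P with hIAc
  set IB := ∫ x, f x * B.indicator (1 : 𝒳 → ℝ) x ∂P with hIB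
  set IBc := ∫ x, f x * Bᶜ.indicator (1 : 𝒳 → ℝ) x ∂P with hIBc
  rw [← hPf] at keyA keyB
  subst hs hEfA hEfAc hEfB hEfBc
  rw [hBA, hBcA] 
  rw [hBAc, hBcAc]
  have h1B : (1:ℝ) - pB ≠ 0 := hBbar ▸ hpBbar0
  rw [show IBc = Pf - IB from by linarith, show IAc = Pf - IA from by linarith, hBbar]
  constructor <;> · field_simp; ring
end
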